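/- arXiv:0809.0144 — 8 statements merged into one kernel-verified Lean document; each statement's English description precedes it below -/
import Mathlib

section
/- Let q = exp(iπ/p) and let z, d be the p×p complex matrices with entries z_{ij} = δ_{i,j+1} and d_{ij} = (q - q⁻¹)·q^{1-j}·[j-1]_q·δ_{i+1,j} (i.e., z is the lower shift matrix and d has entries (q-q⁻¹)q^{1-j}[j-1]_q on the superdiagonal). Then d*z = (q - q⁻¹)·I + q⁻²·z*d, and z^p = 0, d^p = 0. -/
open Matrix

/-- Balanced quantum integer `[n]_q = (q^n - q^{-n})/(q - q^{-1})`. -/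
noncomputable def qint (q : ℂ) (n : ℕ) : ℂ := (q ^ n - q⁻¹ ^ n) / (q - q⁻¹)

/-- The `p×p` lower shift matrix `z` (ones on the subdiagonal). -/
noncomputable def zmat (p : ℕ) : Matrix (Fin p) (Fin p) ℂ :=
  Matrix.of fun i j => if (i : ℕ) = (j : ℕ) + 1 then 1 else 0

/-- The `p×p` matrix `d` with entries `(q - q⁻¹) q^{1-j} [j]_q` on the superdiagonal
(`j` the 0-based column index; in 1-based indexing the entry at `(j-1, j)` is
`(q - q⁻¹) q^{2-j} [j-1]_q`). -/
noncomputable def dmat (p : ℕ) (q : ℂ) : Matrix (Fin p) (Fin p) ℂ :=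
  Matrix.of fun i j =>
    if (j : ℕ) = (i : ℕ) + 1 then (q - q⁻¹) * q ^ (1 - ((j : ℕ) : ℤ)) * qint q (j : ℕ)
    else 0

lemma sum_support (p : ℕ) (f : Fin p → ℂ) (m : ℕ) (hf : ∀ k : Fin p, (k:ℕ) ≠ m → f k = 0) :
    ∑ k, f k = if h : m < p then f ⟨m, h⟩ else 0 := by
  split
  · next h => exact Fintype.sum_eq_single _ (fun k hk => hf k (fun hkm => hk (Fin.ext hkm)))
  · next h => exact Finset.sum_eq_zero fun k _ => hf k (fun hkm => h (hkm ▸ k.isLt))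

lemma subdiag_pow {p : ℕ} (M : Matrix (Fin p) (Fin p) ℂ)
    (h : ∀ i j : Fin p, (i:ℕ) ≠ (j:ℕ) + 1 → M i j = 0) :
    ∀ k (i j : Fin p), (i:ℕ) ≠ (j:ℕ) + k → (M ^ k) i j = 0 := by
  intro k
  induction k with
  | zero =>
    intro i j hij
    simp only [pow_zero, Matrix.one_apply]
    rw [if_neg]
    intro he; apply hij; rw [he]; simp
  | succ n ih =>
    intro i j hij
    rw [pow_succ, Matrix.mul_apply]
    refine Finset.sum_eq_zero fun l _ => ?_
    by_cases hl : (l:ℕ) = (j:ℕ) + 1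
    · rw [ih i l (fun he => hij (by omega)), zero_mul]
    · rw [h l j hl, mul_zero]

lemma zmat_pow_eq_zero (p : ℕ) : zmat p ^ p = 0 := by
  have hz : ∀ a b : Fin p, (a:ℕ) ≠ (b:ℕ) + 1 → zmat p a b = 0 := fun a b hab => by
    simp only [zmat, Matrix.of_apply]; exact if_neg hab
  ext i j
  rw [subdiag_pow (zmat p) hz p i j (by omega)]
  simp

lemma dmat_pow_eq_zero (p : ℕ) (q : ℂ) : dmat p q ^ p = 0 := by
  have hd : ∀ a b : Fin p, (a:ℕ) ≠ (b:ℕ) + 1 → (dmat p q)ᵀ a b = 0 := fun a b hab => by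
    simp only [dmat, Matrix.transpose_apply, Matrix.of_apply]; exact if_neg hab
  have h : ((dmat p q)ᵀ) ^ p = 0 := by
    ext i j
    rw [subdiag_pow ((dmat p q)ᵀ) hd p i j (by omega)]
    simp
  have h2 := congrArg Matrix.transpose h
  rwa [← Matrix.transpose_pow, Matrix.transpose_transpose] at h2

lemma step_identity (q : ℂ) (hq0 : q ≠ 0) (hqd : q - q⁻¹ ≠ 0) (h21 : q ^ 2 - 1 ≠ 0) (n : ℕ) :
    (q - q⁻¹) * q ^ (1 - ((n:ℤ) + 1)) * qint q (n + 1)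
      = (q - q⁻¹) + q⁻¹ ^ 2 * ((q - q⁻¹) * q ^ (1 - (n:ℤ)) * qint q n) := by
  have h1 : (1 : ℤ) - ((n:ℤ) + 1) = -(n:ℤ) := by ring
  rw [h1, _root_.zpow_neg, zpow_natCast, zpow_sub₀ hq0, zpow_one, zpow_natCast]
  unfold qint
  have hqn : q ^ n ≠ 0 := pow_ne_zero _ hq0
  have hD : (-(q ^ 2 * q ^ (n * 2)) + q ^ 4 * q ^ (n * 2)) ≠ 0 := by
    have h := mul_ne_zero (pow_ne_zero (2 + n * 2) hq0) h21
    intro h0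
    apply h
    linear_combination h0
  field_simp [hq0, hqd, h21, hqn, hD]
  have hDi := mul_inv_cancel₀ hD
  linear_combination (0 : ℂ) * hDi - q⁻¹ ^ n * mul_inv_cancel₀ hq0

lemma last_identity (q : ℂ) (hq0 : q ≠ 0) (hqd : q - q⁻¹ ≠ 0) (h21 : q ^ 2 - 1 ≠ 0) (n : ℕ)
    (hqp : q ^ (n + 1) = -1) :
    (0 : ℂ) = (q - q⁻¹) + q⁻¹ ^ 2 * ((q - q⁻¹) * q ^ (1 - (n:ℤ)) * qint q n) := by
  have hqn : q ^ n = -q⁻¹ := by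
    have h : q ^ n * q = -1 := by rw [← pow_succ]; exact hqp
    field_simp at h ⊢
    linear_combination h
  have hqin : q⁻¹ ^ n = -q := by
    rw [inv_pow, hqn]
    field_simp
  rw [zpow_sub₀ hq0, zpow_one, zpow_natCast, hqn]
  unfold qint
  rw [hqn, hqin]
  have hD : (q ^ 3 - q ^ 5) ≠ 0 := by
    have h := mul_ne_zero (pow_ne_zero 3 hq0) h21
    intro h0
    apply h
    linear_combination -h0
  field_simp [hq0, hqd, h21, hD]
  have hDi := mul_inv_cancel₀ hD
  linear_combination (0 : ℂ) * hDi

/-- for `q = exp(iπ/p)`, the shift matrix `z` and the superdiagonal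
matrix `d` satisfy `d z = (q - q⁻¹) I + q⁻² z d`, and `z^p = 0`, `d^p = 0`. -/
theorem stmt3 (p : ℕ) (hp : 2 ≤ p) (q : ℂ)
    (hq : q = Complex.exp ((Real.pi : ℂ) * Complex.I / (p : ℂ))) :
    dmat p q * zmat p
        = (q - q⁻¹) • (1 : Matrix (Fin p) (Fin p) ℂ) + (q⁻¹ ^ 2) • (zmat p * dmat p q) ∧
      zmat p ^ p = 0 ∧ dmat p q ^ p = 0 := by
  have hp0 : (p : ℂ) ≠ 0 := Nat.cast_ne_zero.mpr (by omega)
  have hq0 : q ≠ 0 := by rw [hq]; exact Complex.exp_ne_zero _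
  have hqp : q ^ p = -1 := by
    rw [hq, ← Complex.exp_nat_mul]
    rw [show (p : ℂ) * ((Real.pi : ℂ) * Complex.I / (p : ℂ)) = (Real.pi : ℂ) * Complex.I by
      field_simp]
    exact Complex.exp_pi_mul_I
  have hq2 : q ^ 2 ≠ 1 := by
    intro h2
    rw [hq, ← Complex.exp_nat_mul, Complex.exp_eq_one_iff] at h2
    obtain ⟨n, hn⟩ := h2
    field_simp [hp0] at hn
    have hpi : (2 * (Real.pi : ℂ) * Complex.I) ≠ 0 := by
      simp [Real.pi_ne_zero, Complex.I_ne_zero]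
    have key : (2 * (Real.pi : ℂ) * Complex.I) * (1 - (n : ℂ) * (p : ℂ)) = 0 := by
      linear_combination ((Real.pi : ℂ) * Complex.I) * hn
    have h3 : (1 : ℂ) - (n : ℂ) * (p : ℂ) = 0 := by
      rcases mul_eq_zero.mp key with h | h
      · exact absurd h hpi
      · exact h
    have h4 : ((n * p : ℤ) : ℂ) = ((1 : ℤ) : ℂ) := by push_cast; linear_combination -h3
    have h5 : (n * p : ℤ) = 1 := Int.cast_injective h4
    have h6 : (p : ℤ) ∣ 1 := ⟨n, by linarith⟩
    have h7 := Int.le_of_dvd one_pos h6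
    omega
  have h21 : q ^ 2 - 1 ≠ 0 := sub_ne_zero_of_ne hq2
  have hqd : q - q⁻¹ ≠ 0 := by
    intro h
    apply hq2
    field_simp at h
    linear_combination h
  refine ⟨?_, zmat_pow_eq_zero p, dmat_pow_eq_zero p q⟩
  ext i j
  have hi1 : (i:ℕ) - 1 < p := by omega
  rw [Matrix.mul_apply, sum_support p _ ((i:ℕ) + 1) (fun k hk => by
    simp only [dmat, Matrix.of_apply]
    rw [if_neg hk, zero_mul])]
  rw [Matrix.add_apply, Matrix.smul_apply, Matrix.smul_apply, Matrix.one_apply,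
    Matrix.mul_apply, sum_support p _ ((i:ℕ) - 1) (fun k hk => by
      simp only [zmat, Matrix.of_apply]
      rw [if_neg (by omega : ¬ (i:ℕ) = (k:ℕ) + 1), zero_mul]),
    dif_pos hi1, smul_eq_mul, smul_eq_mul]
  by_cases hij : i = j
  · subst hij
    rw [if_pos rfl]
    by_cases hiz : (i:ℕ) = 0
    · have e3 : zmat p i ⟨(i:ℕ)-1, hi1⟩ = 0 := by
        simp only [zmat, Matrix.of_apply]
        rw [if_neg (by omega)]
      rw [e3, zero_mul, mul_zero, add_zero, mul_one]
      have hi : (i:ℕ) + 1 < p := by omega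
      rw [dif_pos hi]
      have e1 : dmat p q i ⟨(i:ℕ)+1, hi⟩
          = (q - q⁻¹) * q ^ (1 - (((i:ℕ)+1 : ℕ) : ℤ)) * qint q ((i:ℕ)+1) := by
        simp only [dmat, Matrix.of_apply]
        simp
      have e2 : zmat p ⟨(i:ℕ)+1, hi⟩ i = 1 := by
        simp only [zmat, Matrix.of_apply]
        simp
      rw [e1, e2, mul_one, hiz]
      norm_num [qint]
      rw [div_self hqd, mul_one]
    · have e3 : zmat p i ⟨(i:ℕ)-1, hi1⟩ = 1 := by
        simp only [zmat, Matrix.of_apply]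
        rw [if_pos (by omega)]
      have e4 : dmat p q ⟨(i:ℕ)-1, hi1⟩ i
          = (q - q⁻¹) * q ^ (1 - ((i:ℕ) : ℤ)) * qint q (i:ℕ) := by
        simp only [dmat, Matrix.of_apply]
        rw [if_pos (by omega)]
      rw [e3, e4, one_mul, mul_one]
      by_cases hi : (i:ℕ) + 1 < p
      · rw [dif_pos hi]
        have e1 : dmat p q i ⟨(i:ℕ)+1, hi⟩
            = (q - q⁻¹) * q ^ (1 - (((i:ℕ)+1 : ℕ) : ℤ)) * qint q ((i:ℕ)+1) := by
          simp only [dmat, Matrix.of_apply]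
          simp
        have e2 : zmat p ⟨(i:ℕ)+1, hi⟩ i = 1 := by
          simp only [zmat, Matrix.of_apply]
          simp
        rw [e1, e2, mul_one]
        have hs := step_identity q hq0 hqd h21 (i:ℕ)
        push_cast at hs ⊢
        exact hs
      · rw [dif_neg hi]
        have hip : (i:ℕ) + 1 = p := by omega
        exact last_identity q hq0 hqd h21 (i:ℕ) (by rw [hip]; exact hqp)
  · rw [if_neg hij]
    have hzd : zmat p i ⟨(i:ℕ)-1, hi1⟩ * dmat p q ⟨(i:ℕ)-1, hi1⟩ j = 0 := by
      by_cases hiz : (i:ℕ) = 0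
      · have hz0 : zmat p i ⟨(i:ℕ)-1, hi1⟩ = 0 := by
          simp only [zmat, Matrix.of_apply]
          rw [if_neg (by omega)]
        rw [hz0, zero_mul]
      · have hd0 : dmat p q ⟨(i:ℕ)-1, hi1⟩ j = 0 := by
          simp only [dmat, Matrix.of_apply]
          rw [if_neg]
          intro he
          exact hij (Fin.ext (by omega))
        rw [hd0, mul_zero]
    rw [hzd, mul_zero, mul_zero, add_zero]
    split
    · next h =>
      have e2 : zmat p ⟨(i:ℕ)+1, h⟩ j = 0 := by
        simp only [zmat, Matrix.of_apply]
        rw [if_neg]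
        intro he
        exact hij (Fin.ext (by omega))
      rw [e2, mul_zero]
    · rfl
end

section
/- With z and d the p×p matrices of the previous statement (z the lower shift, d_{j-1,j} = (q-q⁻¹)q^{2-j}[j-1]_q), the element t = Σ_{i=1}^{p-1} (1/[i]_q)·z^i·d^i equals (q - q⁻¹) times the diagonal matrix diag(0, 1, 2, …, p-1) with ordinary integer entries. -/
open Finset in
lemma key (x : ℂ) : ∀ (j : ℕ), (∀ i : ℕ, 1 ≤ i → i ≤ j → 1 - x ^ i ≠ 0) →
    ∑ i ∈ Finset.Icc 1 j, (∏ m ∈ Finset.Ioc (j - i) j, (1 - x ^ m)) / (1 - x ^ i) = (j : ℂ) := by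
  intro j
  induction j with
  | zero => intro _; simp
  | succ j ih =>
    intro hc
    have hc' : ∀ i : ℕ, 1 ≤ i → i ≤ j → 1 - x ^ i ≠ 0 :=
      fun i h1 h2 => hc i h1 (h2.trans (Nat.le_succ j))
    -- top term
    have htop : (∏ m ∈ Finset.Ioc (j + 1 - (j+1)) (j+1), (1 - x ^ m)) / (1 - x ^ (j+1))
        = ∏ m ∈ Finset.Ioc (j - j) j, (1 - x ^ m) := by
      rw [Nat.sub_self, Nat.sub_self, Finset.prod_Ioc_succ_top (Nat.zero_le j),
        mul_div_assoc, div_self (hc (j+1) (Nat.succ_le_succ (Nat.zero_le j)) le_rfl), mul_one]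
    -- Pascal rewrite for each i in Icc 1 j
    have hterm : ∀ i ∈ Finset.Icc 1 j,
        (∏ m ∈ Finset.Ioc (j + 1 - i) (j+1), (1 - x ^ m)) / (1 - x ^ i)
          = (∏ m ∈ Finset.Ioc (j - (i-1)) j, (1 - x ^ m))
            + x ^ i * ((∏ m ∈ Finset.Ioc (j - i) j, (1 - x ^ m)) / (1 - x ^ i)) := by
      intro i hi
      rw [Finset.mem_Icc] at hi
      obtain ⟨h1, h2⟩ := hi
      have hsub : j + 1 - i ≤ j := by omega
      have he1 : j - (i-1) = j + 1 - i := by omega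
      rw [Finset.prod_Ioc_succ_top hsub, he1]
      have hFi : (∏ m ∈ Finset.Ioc (j - i) j, (1 - x ^ m))
          = (1 - x ^ (j + 1 - i)) * ∏ m ∈ Finset.Ioc (j + 1 - i) j, (1 - x ^ m) := by
        have hins : Finset.Ioc (j - i) j = insert (j + 1 - i) (Finset.Ioc (j + 1 - i) j) := by
          have h3 : (j - i) + 1 = j + 1 - i := by omega
          rw [← Finset.Icc_add_one_left_eq_Ioc, h3, Finset.Icc_eq_cons_Ioc hsub,
            Finset.cons_eq_insert]
        rw [hins, Finset.prod_insert (by simp)]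
      have hp : 1 - x ^ (j+1) = (1 - x ^ i) + x ^ i * (1 - x ^ (j + 1 - i)) := by
        have hxx : x ^ i * x ^ (j + 1 - i) = x ^ (j + 1) := by
          rw [← pow_add]; congr 1; omega
        linear_combination hxx
      have hci : (1 - x ^ i) ≠ 0 := hc' i h1 h2
      rw [hp, hFi]
      field_simp
    rw [Finset.sum_Icc_succ_top (Nat.succ_le_succ (Nat.zero_le j)), htop,
      Finset.sum_congr rfl hterm, Finset.sum_add_distrib]
    -- reindex the first sum
    have hre : ∑ i ∈ Finset.Icc 1 j, (∏ m ∈ Finset.Ioc (j - (i-1)) j, (1 - x ^ m))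
        = ∑ i ∈ Finset.range j, (∏ m ∈ Finset.Ioc (j - i) j, (1 - x ^ m)) := by
      rw [← Finset.Ico_add_one_right_eq_Icc, Finset.sum_Ico_eq_sum_range]
      simp
    have hsplit : ∑ i ∈ Finset.range j, (∏ m ∈ Finset.Ioc (j - i) j, (1 - x ^ m))
        = 1 + ∑ i ∈ Finset.Icc 1 j, (∏ m ∈ Finset.Ioc (j - i) j, (1 - x ^ m))
          - ∏ m ∈ Finset.Ioc (j - j) j, (1 - x ^ m) := by
      have h1 : ∑ i ∈ Finset.range (j+1), (∏ m ∈ Finset.Ioc (j - i) j, (1 - x ^ m))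
          = ∑ i ∈ Finset.range j, (∏ m ∈ Finset.Ioc (j - i) j, (1 - x ^ m))
            + ∏ m ∈ Finset.Ioc (j - j) j, (1 - x ^ m) :=
        Finset.sum_range_succ _ j
      have h2 : ∑ i ∈ Finset.range (j+1), (∏ m ∈ Finset.Ioc (j - i) j, (1 - x ^ m))
          = 1 + ∑ i ∈ Finset.Icc 1 j, (∏ m ∈ Finset.Ioc (j - i) j, (1 - x ^ m)) := by
        rw [Finset.sum_range_succ']
        have : ∑ i ∈ Finset.Icc 1 j, (∏ m ∈ Finset.Ioc (j - i) j, (1 - x ^ m))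
            = ∑ i ∈ Finset.range j, (∏ m ∈ Finset.Ioc (j - (i+1)) j, (1 - x ^ m)) := by
          rw [← Finset.Ico_add_one_right_eq_Icc, Finset.sum_Ico_eq_sum_range]
          simp [add_comm]
        rw [this]
        simp [add_comm]
      rw [h2] at h1
      linear_combination -h1
    have hdecomp : ∑ i ∈ Finset.Icc 1 j, (∏ m ∈ Finset.Ioc (j - i) j, (1 - x ^ m))
        = (j : ℂ) - ∑ i ∈ Finset.Icc 1 j,
            x ^ i * ((∏ m ∈ Finset.Ioc (j - i) j, (1 - x ^ m)) / (1 - x ^ i)) := by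
      have hper : ∀ i ∈ Finset.Icc 1 j, (∏ m ∈ Finset.Ioc (j - i) j, (1 - x ^ m))
          = (∏ m ∈ Finset.Ioc (j - i) j, (1 - x ^ m)) / (1 - x ^ i)
            - x ^ i * ((∏ m ∈ Finset.Ioc (j - i) j, (1 - x ^ m)) / (1 - x ^ i)) := by
        intro i hi
        rw [Finset.mem_Icc] at hi
        have hci : (1 - x ^ i) ≠ 0 := hc' i hi.1 hi.2
        field_simp
      rw [Finset.sum_congr rfl hper, Finset.sum_sub_distrib, ih hc']
    rw [hre, hsplit, hdecomp]
    push_cast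
    ring





noncomputable def ee (q : ℂ) (m : ℕ) : ℂ := (q - q⁻¹) * q ^ (1 - (m : ℤ)) * qint q m

lemma zmat_pow (p : ℕ) : ∀ (i : ℕ) (a b : Fin p),
    (zmat p ^ i) a b = if (a : ℕ) = (b : ℕ) + i then 1 else 0 := by
  intro i
  induction i with
  | zero =>
    intro a b
    simp [Matrix.one_apply, Fin.ext_iff, eq_comm]
  | succ i ih =>
    intro a b
    rw [pow_succ, Matrix.mul_apply]
    simp only [ih]
    simp only [zmat, Matrix.of_apply]
    by_cases hb : (b : ℕ) + 1 < p
    · rw [Finset.sum_eq_single (⟨(b : ℕ) + 1, hb⟩ : Fin p)]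
      · have hcoe : ((⟨(b : ℕ) + 1, hb⟩ : Fin p) : ℕ) = (b : ℕ) + 1 := rfl
        rw [hcoe, if_pos rfl, mul_one]
        by_cases h : (a : ℕ) = (b : ℕ) + 1 + i
        · rw [if_pos h, if_pos (by omega)]
        · rw [if_neg h, if_neg (by omega)]
      · intro l _ hl
        rw [if_neg (show ¬ (l : ℕ) = (b : ℕ) + 1 from fun hc => hl (Fin.ext hc)), mul_zero]
      · intro h; exact absurd (Finset.mem_univ _) h
    · have h0 : ∀ l : Fin p, ((if (a : ℕ) = (l : ℕ) + i then (1:ℂ) else 0) *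
          (if (l : ℕ) = (b : ℕ) + 1 then (1:ℂ) else 0)) = 0 := by
        intro l
        rw [if_neg (show ¬ (l : ℕ) = (b : ℕ) + 1 by omega), mul_zero]
      rw [Finset.sum_congr rfl (fun l _ => h0 l), Finset.sum_const_zero,
        if_neg (show ¬ (a : ℕ) = (b : ℕ) + (i+1) by omega)]

lemma dmat_pow (p : ℕ) (q : ℂ) : ∀ (i : ℕ) (a b : Fin p),
    (dmat p q ^ i) a b = if (b : ℕ) = (a : ℕ) + i then
      ∏ m ∈ Finset.Ioc (a : ℕ) (b : ℕ), ee q m else 0 := by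
  intro i
  induction i with
  | zero =>
    intro a b
    simp only [pow_zero, Matrix.one_apply, Nat.add_zero]
    by_cases h : a = b
    · subst h; simp
    · rw [if_neg h, if_neg (fun hc => h (Fin.ext hc.symm))]
  | succ i ih =>
    intro a b
    rw [pow_succ, Matrix.mul_apply]
    simp only [ih]
    simp only [dmat, Matrix.of_apply]
    by_cases hb : 1 ≤ (b : ℕ)
    · have hbp : (b : ℕ) - 1 < p := by omega
      rw [Finset.sum_eq_single (⟨(b : ℕ) - 1, hbp⟩ : Fin p)]
      · have hcoe : ((⟨(b : ℕ) - 1, hbp⟩ : Fin p) : ℕ) = (b : ℕ) - 1 := rfl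
        rw [hcoe, if_pos (show (b : ℕ) = ((b : ℕ) - 1) + 1 by omega)]
        by_cases h : (b : ℕ) = (a : ℕ) + i + 1
        · rw [if_pos (show (b : ℕ) - 1 = (a : ℕ) + i by omega),
            if_pos (show (b : ℕ) = (a : ℕ) + (i + 1) by omega)]
          have hab : (a : ℕ) ≤ (b : ℕ) - 1 := by omega
          have hb1 : (b : ℕ) = ((b : ℕ) - 1) + 1 := by omega
          conv_rhs => rw [hb1]
          rw [Finset.prod_Ioc_succ_top hab]
          congr 1
          rw [ee, ← hb1]
        · rw [if_neg (show ¬ (b : ℕ) - 1 = (a : ℕ) + i by omega), zero_mul,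
            if_neg (show ¬ (b : ℕ) = (a : ℕ) + (i + 1) by omega)]
      · intro l _ hl
        rw [if_neg (show ¬ (b : ℕ) = (l : ℕ) + 1 from
          fun hc => hl (Fin.ext (show (l : ℕ) = (b : ℕ) - 1 by omega))), mul_zero]
      · intro h; exact absurd (Finset.mem_univ _) h
    · have h0 : ∀ l : Fin p, ((if (l : ℕ) = (a : ℕ) + i then
            ∏ m ∈ Finset.Ioc (a : ℕ) (l : ℕ), ee q m else 0) *
          (if (b : ℕ) = (l : ℕ) + 1 then (q - q⁻¹) * q ^ (1 - ((b : ℕ) : ℤ)) * qint q (b : ℕ) else 0)) = 0 := by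
        intro l
        rw [if_neg (show ¬ (b : ℕ) = (l : ℕ) + 1 by omega), mul_zero]
      rw [Finset.sum_congr rfl (fun l _ => h0 l), Finset.sum_const_zero,
        if_neg (show ¬ (b : ℕ) = (a : ℕ) + (i + 1) by omega)]

lemma zd_pow (p : ℕ) (q : ℂ) (i : ℕ) (a b : Fin p) :
    (zmat p ^ i * dmat p q ^ i) a b =
      if (a : ℕ) = (b : ℕ) ∧ i ≤ (a : ℕ) then
        ∏ m ∈ Finset.Ioc ((a : ℕ) - i) (a : ℕ), ee q m else 0 := by
  rw [Matrix.mul_apply]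
  simp only [zmat_pow, dmat_pow]
  by_cases h : (a : ℕ) = (b : ℕ) ∧ i ≤ (a : ℕ)
  · obtain ⟨hab, hia⟩ := h
    have hl : (a : ℕ) - i < p := by omega
    rw [Finset.sum_eq_single (⟨(a : ℕ) - i, hl⟩ : Fin p)]
    · have hcoe : ((⟨(a : ℕ) - i, hl⟩ : Fin p) : ℕ) = (a : ℕ) - i := rfl
      rw [hcoe, if_pos (show (a : ℕ) = ((a : ℕ) - i) + i by omega),
        if_pos (show (b : ℕ) = ((a : ℕ) - i) + i by omega), one_mul,
        if_pos ⟨hab, hia⟩, ← hab]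
    · intro l _ hl'
      by_cases h1 : (a : ℕ) = (l : ℕ) + i
      · exact absurd (Fin.ext (show (l : ℕ) = (a : ℕ) - i by omega)) hl'
      · rw [if_neg h1, zero_mul]
    · intro h; exact absurd (Finset.mem_univ _) h
  · have h0 : ∀ l : Fin p, ((if (a : ℕ) = (l : ℕ) + i then (1:ℂ) else 0) *
        (if (b : ℕ) = (l : ℕ) + i then ∏ m ∈ Finset.Ioc (l : ℕ) (b : ℕ), ee q m else 0)) = 0 := by
      intro l
      by_cases h1 : (a : ℕ) = (l : ℕ) + i
      · rw [if_neg (show ¬ (b : ℕ) = (l : ℕ) + i by omega), mul_zero]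
      · rw [if_neg h1, zero_mul]
    rw [Finset.sum_congr rfl (fun l _ => h0 l), Finset.sum_const_zero, if_neg h]



lemma hx_lem (p : ℕ) (hp : 2 ≤ p) (q : ℂ)
    (hq : q = Complex.exp ((Real.pi : ℂ) * Complex.I / (p : ℂ))) :
    ∀ i : ℕ, 1 ≤ i → i ≤ p - 1 → 1 - (q⁻¹ ^ 2) ^ i ≠ 0 := by
  intro i h1 h2 hcon
  have hinv : q⁻¹ = Complex.exp (-((Real.pi : ℂ) * Complex.I / (p : ℂ))) := by
    rw [hq, ← Complex.exp_neg]
  have hxi : (q⁻¹ ^ 2) ^ i = Complex.exp (((2 * i : ℕ) : ℂ) * -((Real.pi : ℂ) * Complex.I / (p : ℂ))) := by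
    rw [hinv, ← pow_mul, ← Complex.exp_nat_mul]
  have h1' : (q⁻¹ ^ 2) ^ i = 1 := by linear_combination -hcon
  rw [hxi, Complex.exp_eq_one_iff] at h1'
  obtain ⟨n, hn⟩ := h1'
  have hp0 : ((p : ℂ)) ≠ 0 := Nat.cast_ne_zero.mpr (by omega)
  have hpi : (Real.pi : ℂ) ≠ 0 := Complex.ofReal_ne_zero.mpr Real.pi_ne_zero
  have hI : Complex.I ≠ 0 := Complex.I_ne_zero
  have key : ((i : ℂ)) = -(n * p) := by
    field_simp at hn
    apply mul_left_cancel₀ (mul_ne_zero (mul_ne_zero (two_ne_zero) hpi) hI)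
    push_cast at hn
    linear_combination (-((Real.pi : ℂ) * Complex.I)) * hn
  have hint : (i : ℤ) = -(n * p) := by exact_mod_cast key
  have hdvd : (p : ℤ) ∣ (i : ℤ) := ⟨-n, by linarith⟩
  have hpos : (0 : ℤ) < i := by exact_mod_cast h1
  have := Int.le_of_dvd hpos hdvd
  omega

lemma ee_eq (q : ℂ) (hq0 : q ≠ 0) (hqq : q - q⁻¹ ≠ 0) (m : ℕ) :
    ee q m = q * (1 - (q⁻¹ ^ 2) ^ m) := by
  have hq21 : q ^ 2 - 1 ≠ 0 := by
    intro h
    apply hqq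
    have : q - q⁻¹ = (q ^ 2 - 1) / q := by field_simp
    rw [this, h, zero_div]
  have hm : (q : ℂ) ^ m ≠ 0 := pow_ne_zero _ hq0
  have h3 : q⁻¹ ^ m / q ^ m = (q⁻¹ ^ 2) ^ m := by
    rw [div_eq_mul_inv, ← inv_pow, ← mul_pow, ← sq]
  rw [ee, qint, zpow_sub₀ hq0, zpow_one, zpow_natCast]
  calc (q - q⁻¹) * (q / q ^ m) * ((q ^ m - q⁻¹ ^ m) / (q - q⁻¹))
      = (q * ((q ^ m - q⁻¹ ^ m) / q ^ m)) * ((q - q⁻¹) / (q - q⁻¹)) := by ring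
    _ = q * (q ^ m / q ^ m - q⁻¹ ^ m / q ^ m) := by rw [div_self hqq, mul_one, sub_div]
    _ = q * (1 - (q⁻¹ ^ 2) ^ m) := by rw [div_self hm, h3]

/-- `t = Σ_{i=1}^{p-1} (1/[i]_q) z^i d^i` equals `(q - q⁻¹)` times the
diagonal matrix `diag(0, 1, 2, …, p-1)` with ordinary integer entries. -/
theorem stmt4 (p : ℕ) (hp : 2 ≤ p) (q : ℂ)
    (hq : q = Complex.exp ((Real.pi : ℂ) * Complex.I / (p : ℂ))) :
    ∑ i ∈ Finset.Icc 1 (p - 1), (qint q i)⁻¹ • (zmat p ^ i * dmat p q ^ i)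
      = (q - q⁻¹) • Matrix.diagonal (fun i : Fin p => ((i : ℕ) : ℂ)) := by
  have hq0 : q ≠ 0 := by rw [hq]; exact Complex.exp_ne_zero _
  have hx : ∀ i : ℕ, 1 ≤ i → i ≤ p - 1 → 1 - (q⁻¹ ^ 2) ^ i ≠ 0 := hx_lem p hp q hq
  have hqq : q - q⁻¹ ≠ 0 := by
    have h1 := hx 1 le_rfl (by omega)
    have h2 : q - q⁻¹ = q * (1 - (q⁻¹ ^ 2) ^ 1) := by
      rw [pow_one]
      field_simp
    rw [h2]
    exact mul_ne_zero hq0 h1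
  ext a b
  rw [Matrix.sum_apply]
  simp only [Matrix.smul_apply, zd_pow, smul_eq_mul]
  by_cases hab : a = b
  · subst hab
    rw [Matrix.diagonal_apply_eq]
    have hsub : Finset.Icc 1 (a : ℕ) ⊆ Finset.Icc 1 (p - 1) :=
      Finset.Icc_subset_Icc le_rfl (by have := a.isLt; omega)
    rw [← Finset.sum_subset hsub (by
      intro i hi hni
      rw [Finset.mem_Icc] at hi hni
      rw [if_neg (by omega), mul_zero])]
    have hterm : ∀ i ∈ Finset.Icc 1 (a : ℕ),
        (qint q i)⁻¹ * (if (a : ℕ) = (a : ℕ) ∧ i ≤ (a : ℕ) then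
            ∏ m ∈ Finset.Ioc ((a : ℕ) - i) (a : ℕ), ee q m else 0)
          = (q - q⁻¹) * ((∏ m ∈ Finset.Ioc ((a : ℕ) - i) (a : ℕ), (1 - (q⁻¹ ^ 2) ^ m))
              / (1 - (q⁻¹ ^ 2) ^ i)) := by
      intro i hi
      rw [Finset.mem_Icc] at hi
      rw [if_pos ⟨rfl, hi.2⟩]
      have hprod : ∏ m ∈ Finset.Ioc ((a : ℕ) - i) (a : ℕ), ee q m
          = q ^ i * ∏ m ∈ Finset.Ioc ((a : ℕ) - i) (a : ℕ), (1 - (q⁻¹ ^ 2) ^ m) := by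
        rw [Finset.prod_congr rfl (fun m _ => ee_eq q hq0 hqq m), Finset.prod_mul_distrib,
          Finset.prod_const, Nat.card_Ioc]
        congr 2
        omega
      have hqint : qint q i = (q ^ i * (1 - (q⁻¹ ^ 2) ^ i)) / (q - q⁻¹) := by
        rw [qint]
        congr 1
        have h5 : q⁻¹ ^ i = q ^ i * (q⁻¹ ^ 2) ^ i := by
          rw [← mul_pow]
          congr 1
          rw [sq, ← mul_assoc, mul_inv_cancel₀ hq0, one_mul]
        rw [h5]
        ring
      have hxi : 1 - (q⁻¹ ^ 2) ^ i ≠ 0 := hx i hi.1 (le_trans hi.2 (by have := a.isLt; omega))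
      have hqi : q ^ i ≠ 0 := pow_ne_zero _ hq0
      rw [hprod, hqint, inv_div]
      have hgen : ∀ A B C P : ℂ, B ≠ 0 → C ≠ 0 → (A / (B * C)) * (B * P) = A * (P / C) := by
        intro A B C P hB hC
        field_simp
      exact hgen _ _ _ _ hqi hxi
    rw [Finset.sum_congr rfl hterm, ← Finset.mul_sum,
      key (q⁻¹ ^ 2) (a : ℕ) (fun i h1 h2 => hx i h1 (le_trans h2 (by have := a.isLt; omega)))]
  · have h0 : ∀ i ∈ Finset.Icc 1 (p - 1),
        (qint q i)⁻¹ * (if (a : ℕ) = (b : ℕ) ∧ i ≤ (a : ℕ) then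
            ∏ m ∈ Finset.Ioc ((a : ℕ) - i) (a : ℕ), ee q m else 0) = 0 := by
      intro i _
      rw [if_neg (fun hc => hab (Fin.ext hc.1)), mul_zero]
    rw [Finset.sum_congr rfl h0, Finset.sum_const_zero, Matrix.diagonal_apply_ne _ hab, mul_zero]
end

section
/- In the algebra generated by z, d with dz = q - q⁻¹ + q⁻²zd, the element 𝓔 = 1 - q⁻¹zd satisfies 𝓔^n = 1 + Σ_{i=1}^{n} [n choose i]_q·(-1)^i·q^{-ni}·z^i·d^i for all n ≥ 1. In particular 𝓔^p = 1 + z^p·d^p when q = e^{iπ/p}, so in the quotient by z^p = d^p = 0 one has 𝓔^p = 1 and 𝓔 is invertible. -/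
/-- The balanced Gaussian `q`-binomial coefficient, defined via the `q`-Pascal
recursion `[n+1 choose k+1]_q = q^{k+1} [n choose k+1]_q + q^{k+1-(n+1)} [n choose k]_q`
(so that `[n choose k]_q = [n]_q!/([n-k]_q! [k]_q!)` whenever the factorials are
nonzero). -/
noncomputable def qbinomG (q : ℂ) : ℕ → ℕ → ℂ
  | _, 0 => 1
  | 0, _ + 1 => 0
  | n + 1, k + 1 =>
      q ^ (k + 1) * qbinomG q n (k + 1) + q ^ (((k : ℤ) + 1) - ((n : ℤ) + 1)) * qbinomG q n k

lemma qb_zero (q : ℂ) (n : ℕ) : qbinomG q n 0 = 1 := by cases n <;> rfl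

lemma qb_lt (q : ℂ) : ∀ n k : ℕ, n < k → qbinomG q n k = 0 := by
  intro n
  induction n with
  | zero => intro k hk; match k, hk with
    | k+1, _ => rfl
  | succ n ih =>
    intro k hk
    match k, hk with
    | k+1, hk =>
      show q ^ (k + 1) * qbinomG q n (k + 1) + _ * qbinomG q n k = 0
      rw [ih (k+1) (by omega), ih k (by omega)]
      ring

lemma qb_diag (q : ℂ) : ∀ n, qbinomG q n n = 1 := by
  intro n
  induction n with
  | zero => rfl
  | succ n ih =>
    show q ^ (n + 1) * qbinomG q n (n + 1) + _ * qbinomG q n n = 1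
    rw [qb_lt q n (n+1) (by omega), ih]
    simp

lemma qb_defnat (q : ℂ) (hq : q ≠ 0) (n k : ℕ) :
    q ^ (n+1) * qbinomG q (n+1) (k+1)
      = q ^ (n+k+2) * qbinomG q n (k+1) + q ^ (k+1) * qbinomG q n k := by
  show q ^ (n+1) * (q ^ (k + 1) * qbinomG q n (k + 1)
      + q ^ (((k : ℤ) + 1) - ((n : ℤ) + 1)) * qbinomG q n k) = _
  have h : (q : ℂ) ^ (((k : ℤ) + 1) - ((n : ℤ) + 1)) * q ^ ((n : ℤ) + 1) = q ^ ((k:ℤ)+1) := by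
    rw [← zpow_add₀ hq]; ring_nf
  have h1 : (q : ℂ) ^ ((n:ℤ)+1) = q ^ (n+1) := by
    rw [← zpow_natCast]; push_cast; ring_nf
  have h2 : (q : ℂ) ^ ((k:ℤ)+1) = q ^ (k+1) := by
    rw [← zpow_natCast]; push_cast; ring_nf
  rw [h1, h2] at h
  linear_combination qbinomG q n k * h

lemma qb_Q (q : ℂ) (hq : q ≠ 0) : ∀ n k : ℕ,
    (q ^ (n+2*k+2) - q ^ n) * qbinomG q n (k+1)
      = (q ^ (2*n+1) - q ^ (2*k+1)) * qbinomG q n k := by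
  intro n
  induction n with
  | zero =>
    intro k
    cases k with
    | zero => show (q^2 - q^0) * qbinomG q 0 1 = _ * qbinomG q 0 0; rw [qb_zero]
              show (q^2-q^0) * 0 = _; ring
    | succ k => show _ * qbinomG q 0 (k+2) = _ * qbinomG q 0 (k+1)
                show _ * (0:ℂ) = _ * (0:ℂ); ring
  | succ n ih =>
    intro k
    apply mul_left_cancel₀ (pow_ne_zero (n+1) hq)
    cases k with
    | zero =>
      have hdef := qb_defnat q hq n 0
      have ihn := ih 0
      rw [qb_zero] at hdef ihn ⊢
      linear_combination (q^(n+3) - q^(n+1)) * hdef + q^(n+3) * ihn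
    | succ k =>
      have hdef1 := qb_defnat q hq n (k+1)
      have hdef2 := qb_defnat q hq n k
      have ih1 := ih (k+1)
      have ih2 := ih k
      linear_combination (q^(n+2*k+5) - q^(n+1)) * hdef1 - (q^(2*n+3) - q^(2*k+3)) * hdef2
        + q^(n+k+4) * ih1 + q^(k+3) * ih2

lemma qb_altnat (q : ℂ) (hq : q ≠ 0) (n k : ℕ) :
    q ^ (k+1) * qbinomG q (n+1) (k+1)
      = qbinomG q n (k+1) + q ^ (n+1) * qbinomG q n k := by
  apply mul_left_cancel₀ (pow_ne_zero (n+1) hq)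
  linear_combination q^(k+1) * qb_defnat q hq n k + q * qb_Q q hq n k

/-- the coefficient recursion -/
lemma crec (q : ℂ) (hq : q ≠ 0) (n k : ℕ) :
    qbinomG q (n+1) (k+1) * (-1:ℂ)^(k+1) * q⁻¹ ^ ((n+1)*(k+1))
      = q⁻¹ ^ (2*(k+1)) * (qbinomG q n (k+1) * (-1:ℂ)^(k+1) * q⁻¹ ^ (n*(k+1)))
        - q * q⁻¹ ^ (2*(k+1)) * (qbinomG q n k * (-1:ℂ)^k * q⁻¹ ^ (n*k)) := by
  have hX : qbinomG q (n+1) (k+1)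
      = q⁻¹ ^ (k+1) * (qbinomG q n (k+1) + q ^ (n+1) * qbinomG q n k) := by
    rw [inv_pow]
    field_simp
    linear_combination qb_altnat q hq n k
  rw [hX]
  field_simp
  have hqn : q ^ n * q⁻¹ ^ n = 1 := by rw [← mul_pow, mul_inv_cancel₀ hq, one_pow]
  linear_combination (-(q * q⁻¹ ^ 2 * q⁻¹ ^ (k * 2) * q⁻¹ ^ (k * n) * qbinomG q n k * (-1:ℂ) ^ k)) * hqn

section
variable {A : Type*} [Ring A] [Algebra ℂ A] (q : ℂ) (hq : q ≠ 0) (d z : A)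
    (hrel : d * z = (q - q⁻¹) • (1 : A) + (q⁻¹ ^ 2) • (z * d))

include hq hrel

lemma d_pow_z : ∀ i : ℕ, d ^ (i+1) * z
    = (q - q * q⁻¹ ^ (2*(i+1))) • d ^ i + q⁻¹ ^ (2*(i+1)) • (z * d ^ (i+1)) := by
  intro i
  induction i with
  | zero =>
    have hc : q - q * (q ^ 2)⁻¹ = q - q⁻¹ := by field_simp
    simpa [hc] using hrel
  | succ i ih =>
    have : d ^ (i+2) * z = d * (d ^ (i+1) * z) := by rw [← mul_assoc, ← pow_succ']
    rw [this, ih]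
    rw [mul_add, mul_smul_comm, mul_smul_comm, ← mul_assoc, hrel]
    rw [add_mul, smul_mul_assoc, smul_mul_assoc, one_mul, smul_add, smul_smul, smul_smul,
      mul_assoc z d, ← pow_succ']
    rw [← pow_succ']
    rw [← add_assoc]
    congr 1
    · rw [← add_smul]
      congr 1
      field_simp
      linear_combination (q⁻¹ ^ 2 * q⁻¹ ^ (i * 2)) * (by rw [← mul_pow, mul_inv_cancel₀ hq, one_pow] : q ^ 2 * q⁻¹ ^ 2 = 1)
    · congr 1
      field_simp
      linear_combination (-(q⁻¹ ^ 2 * q⁻¹ ^ (i * 2))) * (by rw [← mul_pow, mul_inv_cancel₀ hq, one_pow] : q ^ 2 * q⁻¹ ^ 2 = 1)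

lemma ZZ : ∀ i : ℕ, (z ^ i * d ^ i) * (z * d)
    = (q - q * q⁻¹ ^ (2*i)) • (z ^ i * d ^ i) + q⁻¹ ^ (2*i) • (z ^ (i+1) * d ^ (i+1)) := by
  intro i
  cases i with
  | zero => simp
  | succ i =>
    have h1 : (z ^ (i+1) * d ^ (i+1)) * (z * d) = z ^ (i+1) * ((d ^ (i+1) * z) * d) := by
      noncomm_ring
    rw [h1, d_pow_z q hq d z hrel, add_mul, smul_mul_assoc, smul_mul_assoc,
      mul_add, mul_smul_comm, mul_smul_comm]
    congr 1
    · rw [← pow_succ]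
    · rw [mul_assoc z, ← pow_succ, ← mul_assoc, ← pow_succ]

lemma mainpow : ∀ n : ℕ, ((1 : A) - q⁻¹ • (z * d)) ^ n
    = ∑ i ∈ Finset.range (n+1),
        (qbinomG q n i * (-1:ℂ)^i * q⁻¹ ^ (n*i)) • (z ^ i * d ^ i) := by
  intro n
  induction n with
  | zero => simp [qb_zero]
  | succ n ih =>
    set F : ℕ → A := fun i =>
      (q⁻¹ ^ (2*i) * (qbinomG q n i * (-1:ℂ)^i * q⁻¹ ^ (n*i))) • (z ^ i * d ^ i) with hF
    set G : ℕ → A := fun i =>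
      (q⁻¹ * q⁻¹ ^ (2*i) * (qbinomG q n i * (-1:ℂ)^i * q⁻¹ ^ (n*i))) • (z ^ (i+1) * d ^ (i+1)) with hG
    have step1 : ((1 : A) - q⁻¹ • (z * d)) ^ (n+1)
        = ∑ i ∈ Finset.range (n+1), F i - ∑ i ∈ Finset.range (n+1), G i := by
      rw [pow_succ, ih, Finset.sum_mul, ← Finset.sum_sub_distrib]
      refine Finset.sum_congr rfl (fun i _ => ?_)
      rw [mul_sub, mul_one, mul_smul_comm, smul_mul_assoc, ZZ q hq d z hrel i]
      simp only [hF, hG]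
      match_scalars
      · have h1 : q⁻¹ * q = 1 := inv_mul_cancel₀ hq
        linear_combination (qbinomG q n i * (-1:ℂ)^i * q⁻¹^(n*i) * (q⁻¹^(2*i) - 1)) * h1
      · ring
    rw [step1]
    have hA0 : F 0 = 1 := by simp only [hF]; simp [qb_zero]
    have hAtop : F (n+1) = 0 := by
      simp only [hF]; rw [qb_lt q n (n+1) (by omega)]; simp
    have hleft : ∑ i ∈ Finset.range (n+1), F (i+1) + 1 = ∑ i ∈ Finset.range (n+1), F i := by
      calc ∑ i ∈ Finset.range (n+1), F (i+1) + 1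
          = ∑ i ∈ Finset.range (n+1), F (i+1) + F 0 := by rw [hA0]
        _ = ∑ i ∈ Finset.range (n+2), F i := (Finset.sum_range_succ' F (n+1)).symm
        _ = ∑ i ∈ Finset.range (n+1), F i + F (n+1) := Finset.sum_range_succ F (n+1)
        _ = ∑ i ∈ Finset.range (n+1), F i := by rw [hAtop, add_zero]
    rw [Finset.sum_range_succ'
      (fun i => (qbinomG q (n+1) i * (-1:ℂ)^i * q⁻¹ ^ ((n+1)*i)) • (z ^ i * d ^ i)) (n+1)]
    have h0 : (qbinomG q (n+1) 0 * (-1:ℂ)^0 * q⁻¹ ^ ((n+1)*0)) • (z ^ 0 * d ^ 0) = (1:A) := by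
      simp [qb_zero]
    rw [h0]
    have hsplit : ∀ i ∈ Finset.range (n+1),
        (qbinomG q (n+1) (i+1) * (-1:ℂ)^(i+1) * q⁻¹ ^ ((n+1)*(i+1))) • (z ^ (i+1) * d ^ (i+1))
          = F (i+1) - G i := by
      intro i _
      rw [crec q hq n i]
      simp only [hF, hG]
      rw [← sub_smul]
      congr 2
      field_simp; linear_combination (q⁻¹ ^ (i * 2) * qbinomG q n i) * (by rw [← mul_pow, mul_inv_cancel₀ hq, one_pow] : q ^ 2 * q⁻¹ ^ 2 = 1)
    rw [Finset.sum_congr rfl hsplit, Finset.sum_sub_distrib, ← hleft]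
    abel
end

/-- in an algebra with `d z = (q - q⁻¹)·1 + q⁻²·z d`, the element
`𝓔 = 1 - q⁻¹ z d` satisfies `𝓔^n = 1 + Σ_{i=1}^n [n choose i]_q (-1)^i q^{-ni} z^i d^i`.
In particular, when `q = e^{iπ/p}`, `𝓔^p = 1 + z^p d^p`; hence in the quotient by
`z^p = d^p = 0` one has `𝓔^p = 1` and `𝓔` is invertible. -/
theorem stmt9 {A : Type*} [Ring A] [Algebra ℂ A] (q : ℂ) (hq : q ≠ 0)
    (hq2 : q - q⁻¹ ≠ 0) (d z : A)
    (hrel : d * z = (q - q⁻¹) • (1 : A) + (q⁻¹ ^ 2) • (z * d)) :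
    (∀ n : ℕ, 1 ≤ n →
      ((1 : A) - q⁻¹ • (z * d)) ^ n
        = 1 + ∑ i ∈ Finset.Icc 1 n,
            (qbinomG q n i * (-1 : ℂ) ^ i * q⁻¹ ^ (n * i)) • (z ^ i * d ^ i)) ∧
    (∀ p : ℕ, 2 ≤ p → q = Complex.exp ((Real.pi : ℂ) * Complex.I / (p : ℂ)) →
      ((1 : A) - q⁻¹ • (z * d)) ^ p = 1 + z ^ p * d ^ p ∧
      (z ^ p = 0 → d ^ p = 0 →
        ((1 : A) - q⁻¹ • (z * d)) ^ p = 1 ∧ IsUnit ((1 : A) - q⁻¹ • (z * d)))) := by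
  have part1 : ∀ n : ℕ, 1 ≤ n →
      ((1 : A) - q⁻¹ • (z * d)) ^ n
        = 1 + ∑ i ∈ Finset.Icc 1 n,
            (qbinomG q n i * (-1 : ℂ) ^ i * q⁻¹ ^ (n * i)) • (z ^ i * d ^ i) := by
    intro n _
    rw [mainpow q hq d z hrel n]
    have hIcc : ∑ i ∈ Finset.Icc 1 n,
          (qbinomG q n i * (-1 : ℂ) ^ i * q⁻¹ ^ (n * i)) • (z ^ i * d ^ i)
        = ∑ i ∈ Finset.range n,
          (qbinomG q n (i+1) * (-1 : ℂ) ^ (i+1) * q⁻¹ ^ (n * (i+1))) • (z ^ (i+1) * d ^ (i+1)) := by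
      rw [← Finset.Ico_add_one_right_eq_Icc, Finset.sum_Ico_eq_sum_range]
      exact Finset.sum_congr (by norm_num) (fun i _ => by rw [Nat.add_comm 1 i])
    rw [hIcc, Finset.sum_range_succ'
      (fun i => (qbinomG q n i * (-1:ℂ)^i * q⁻¹ ^ (n*i)) • (z ^ i * d ^ i)) n]
    have h0 : (qbinomG q n 0 * (-1:ℂ)^0 * q⁻¹ ^ (n*0)) • (z ^ 0 * d ^ 0) = (1:A) := by
      simp [qb_zero]
    rw [h0, add_comm]
  refine ⟨part1, ?_⟩
  intro p hp hqe
  have hp0 : (p : ℂ) ≠ 0 := Nat.cast_ne_zero.mpr (by omega)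
  have hqp : q ^ p = -1 := by
    rw [hqe, ← Complex.exp_nat_mul]
    have : (p:ℂ) * ((Real.pi : ℂ) * Complex.I / (p : ℂ)) = (Real.pi : ℂ) * Complex.I := by
      field_simp
    rw [this, Complex.exp_pi_mul_I]
  have h2p : q ^ (2*p) = 1 := by
    rw [mul_comm, pow_mul, hqp]
    norm_num
  have hroot : ∀ m : ℕ, 1 ≤ m → m ≤ p - 1 → q ^ (2*m) ≠ 1 := by
    intro m hm1 hm2 hcon
    rw [hqe, ← Complex.exp_nat_mul, Complex.exp_eq_one_iff] at hcon
    obtain ⟨k, hk⟩ := hcon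
    have hπ : (Real.pi : ℂ) ≠ 0 := by exact_mod_cast Real.pi_ne_zero
    have hI : Complex.I ≠ 0 := Complex.I_ne_zero
    rw [div_eq_mul_inv] at hk
    have h2 : ((2*m : ℕ):ℂ) * ((Real.pi:ℂ) * Complex.I)
        = ((2*(k*p) : ℤ):ℂ) * ((Real.pi:ℂ) * Complex.I) := by
      push_cast
      have hk' := congrArg (fun x : ℂ => x * (p:ℂ)) hk
      field_simp [hp0] at hk'
      push_cast at hk'
      linear_combination ((Real.pi:ℂ) * Complex.I) * hk'
    have h3 : ((2*m : ℕ):ℂ) = ((2*(k*p) : ℤ):ℂ) :=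
      mul_right_cancel₀ (mul_ne_zero hπ hI) h2
    have h4 : (2*m : ℤ) = 2*(k*p) := by exact_mod_cast h3
    have h5 : (m : ℤ) = k * p := by omega
    have hple : (2:ℤ) ≤ (p:ℤ) := by exact_mod_cast hp
    have hm1' : (1:ℤ) ≤ (m:ℤ) := by exact_mod_cast hm1
    have hm2' : (m:ℤ) ≤ (p:ℤ) - 1 := by
      have : m ≤ p - 1 := hm2
      omega
    rcases le_or_gt k 0 with hk0 | hk0
    · have : k * (p:ℤ) ≤ 0 := mul_nonpos_of_nonpos_of_nonneg hk0 (by linarith)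
      linarith
    · have hk1 : (1:ℤ) ≤ k := hk0
      have : (p:ℤ) ≤ k * p := le_mul_of_one_le_left (by linarith) hk1
      linarith
  have vanish : ∀ i : ℕ, 1 ≤ i → i ≤ p - 1 → qbinomG q p i = 0 := by
    intro i
    induction i with
    | zero => intro h; omega
    | succ i ih =>
      intro _ hle
      have hQ := qb_Q q hq p i
      have hrhs : (q ^ (2*p+1) - q ^ (2*i+1)) * qbinomG q p i = 0 := by
        cases Nat.eq_zero_or_pos i with
        | inl h0 =>
          subst h0
          rw [qb_zero]
          have : q ^ (2*p+1) - q ^ (2*0+1) = 0 := by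
            have : q ^ (2*p+1) = q ^ (2*p) * q := by ring
            rw [this, h2p]; ring
          rw [this, zero_mul]
        | inr hpos =>
          rw [ih hpos (by omega), mul_zero]
      rw [hrhs] at hQ
      have hfac : q ^ (p+2*i+2) - q ^ p ≠ 0 := by
        intro hcz
        have heq : q ^ p * q ^ (2*(i+1)) = q ^ p * 1 := by
          linear_combination hcz
        exact hroot (i+1) (by omega) (by omega)
          (mul_left_cancel₀ (pow_ne_zero p hq) heq)
      exact (mul_eq_zero.mp hQ).resolve_left hfac
  have coefp : qbinomG q p p * (-1:ℂ)^p * q⁻¹ ^ (p*p) = 1 := by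
    rw [qb_diag]
    have hup : q⁻¹ ^ p = -1 := by
      rw [inv_pow, hqp]
      norm_num
    rw [pow_mul, hup, one_mul, ← mul_pow]
    norm_num
  have hsum : ∑ i ∈ Finset.Icc 1 p,
      (qbinomG q p i * (-1 : ℂ) ^ i * q⁻¹ ^ (p * i)) • (z ^ i * d ^ i)
      = z ^ p * d ^ p := by
    rw [Finset.sum_eq_single_of_mem p (Finset.mem_Icc.mpr ⟨by omega, le_refl p⟩)]
    · rw [coefp, one_smul]
    · intro b hb hbne
      have hb' := Finset.mem_Icc.mp hb
      rw [vanish b hb'.1 (by omega), zero_mul, zero_mul, zero_smul]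
  have hEp : ((1 : A) - q⁻¹ • (z * d)) ^ p = 1 + z ^ p * d ^ p := by
    rw [part1 p (by omega), hsum]
  refine ⟨hEp, fun hz hd => ?_⟩
  have hE1 : ((1 : A) - q⁻¹ • (z * d)) ^ p = 1 := by
    rw [hEp, hz, zero_mul, add_zero]
  have hsucc : p - 1 + 1 = p := by omega
  have h1 : ((1 : A) - q⁻¹ • (z * d)) * ((1 : A) - q⁻¹ • (z * d)) ^ (p-1) = 1 := by
    rw [← pow_succ', hsucc, hE1]
  have h2 : ((1 : A) - q⁻¹ • (z * d)) ^ (p-1) * ((1 : A) - q⁻¹ • (z * d)) = 1 := by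
    rw [← pow_succ, hsucc, hE1]
  exact ⟨hE1, ⟨⟨_, ((1 : A) - q⁻¹ • (z * d)) ^ (p-1), h1, h2⟩, rfl⟩⟩
end

section
/- Let q = e^{iπ/p} and let Ā be the quotient of the algebra ⟨z, d | dz = q - q⁻¹ + q⁻²zd⟩ by the central elements z^p and d^p. Then the monomials z^m·d^n with 0 ≤ m, n ≤ p-1 form a basis of Ā, so dim Ā = p². -/
/-- The defining relations of `ℂ̄_q[z,∂]`: `∂ z = (q - q⁻¹)·1 + q⁻²·z ∂`,
`z^p = 0`, `∂^p = 0` (generator `0` is `z`, generator `1` is `∂`). -/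
inductive CqBarRel (q : ℂ) (p : ℕ) : FreeAlgebra ℂ (Fin 2) → FreeAlgebra ℂ (Fin 2) → Prop
  | main : CqBarRel q p (FreeAlgebra.ι ℂ 1 * FreeAlgebra.ι ℂ 0)
      ((q - q⁻¹) • (1 : FreeAlgebra ℂ (Fin 2))
        + (q⁻¹ ^ 2) • (FreeAlgebra.ι ℂ 0 * FreeAlgebra.ι ℂ 1))
  | zp : CqBarRel q p ((FreeAlgebra.ι ℂ 0) ^ p) 0
  | dp : CqBarRel q p ((FreeAlgebra.ι ℂ 1) ^ p) 0

/-- The image of `z` in `ℂ̄_q[z,∂]`. -/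
noncomputable def zbar (q : ℂ) (p : ℕ) : RingQuot (CqBarRel q p) :=
  RingQuot.mkRingHom (CqBarRel q p) (FreeAlgebra.ι ℂ 0)

/-- The image of `∂` in `ℂ̄_q[z,∂]`. -/
noncomputable def dbar (q : ℂ) (p : ℕ) : RingQuot (CqBarRel q p) :=
  RingQuot.mkRingHom (CqBarRel q p) (FreeAlgebra.ι ℂ 1)

namespace Stmt10Aux

noncomputable def lam (q : ℂ) (k : ℕ) : ℂ := q - q * (q⁻¹ ^ 2) ^ k

lemma lam_zero (q : ℂ) : lam q 0 = 0 := by simp [lam]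

lemma lam_succ (q : ℂ) (hq0 : q ≠ 0) (k : ℕ) :
    lam q (k + 1) = (q - q⁻¹) + q⁻¹ ^ 2 * lam q k := by
  unfold lam; field_simp; linear_combination (-(1 / q ^ 2) ^ k) * mul_one_div_cancel (pow_ne_zero 2 hq0)

lemma lam_succ' (q : ℂ) (hq0 : q ≠ 0) (k : ℕ) :
    lam q (k + 1) = lam q k + (q - q⁻¹) * (q⁻¹ ^ 2) ^ k := by
  unfold lam; field_simp; linear_combination (-(1 / q ^ 2) ^ k) * mul_one_div_cancel (pow_ne_zero 2 hq0)

lemma inv_sq_pow (q : ℂ) (k : ℕ) : (q⁻¹ ^ 2) ^ k = (q ^ (2 * k))⁻¹ := by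
  rw [← inv_pow, ← pow_mul]

lemma lam_eq_zero_iff (q : ℂ) (hq0 : q ≠ 0) (k : ℕ) :
    lam q k = 0 ↔ q ^ (2 * k) = 1 := by
  unfold lam
  rw [inv_sq_pow, sub_eq_zero]
  constructor
  · intro h
    have h1 : q * 1 = q * (q ^ (2 * k))⁻¹ := by rw [mul_one]; exact h
    have h2 := mul_left_cancel₀ hq0 h1
    rwa [eq_comm, inv_eq_one] at h2
  · intro h; rw [h]; simp

lemma lam_one (q : ℂ) (hq0 : q ≠ 0) : lam q 1 = q - q⁻¹ := by
  rw [← zero_add 1, lam_succ q hq0, lam_zero]; ring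


variable (p : ℕ) (q : ℂ)

def Zm : Matrix (Fin p) (Fin p) ℂ := fun i j => if (i : ℕ) = (j : ℕ) + 1 then 1 else 0

noncomputable def Dm : Matrix (Fin p) (Fin p) ℂ :=
  fun i j => if (j : ℕ) = (i : ℕ) + 1 then lam q (j : ℕ) else 0

noncomputable def mu (i n : ℕ) : ℂ := ∏ t ∈ Finset.range n, lam q (i + 1 + t)

lemma sum_fin_ite (c : ℕ) (f : Fin p → ℂ) :
    (∑ k : Fin p, if (k : ℕ) = c then f k else 0) = if h : c < p then f ⟨c, h⟩ else 0 := by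
  split_ifs with h
  · rw [Finset.sum_eq_single (⟨c, h⟩ : Fin p)]
    · exact if_pos rfl
    · intro b _ hb
      exact if_neg (fun hbc => hb (Fin.ext hbc))
    · intro hmem; exact absurd (Finset.mem_univ _) hmem
  · apply Finset.sum_eq_zero
    intro k _
    rw [if_neg]
    intro hk
    exact h (hk ▸ k.isLt)

lemma Zm_pow (m : ℕ) : ∀ i j : Fin p,
    (Zm p ^ m) i j = if (i : ℕ) = (j : ℕ) + m then 1 else 0 := by
  induction m with
  | zero =>
    intro i j
    simp [Matrix.one_apply, Fin.ext_iff]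
  | succ m ih =>
    intro i j
    rw [pow_succ, Matrix.mul_apply]
    have hterm : ∀ k : Fin p, (Zm p ^ m) i k * Zm p k j
        = if (k : ℕ) = (j : ℕ) + 1 then (if (i : ℕ) = (k : ℕ) + m then 1 else 0) else 0 := by
      intro k
      rw [ih i k]
      unfold Zm
      split_ifs <;> ring
    rw [Finset.sum_congr rfl (fun k _ => hterm k), sum_fin_ite]
    have hi := i.isLt
    have hj := j.isLt
    split_ifs <;> simp_all <;> omega

lemma Dm_pow (n : ℕ) : ∀ i j : Fin p,
    (Dm p q ^ n) i j = if (j : ℕ) = (i : ℕ) + n then mu q (i : ℕ) n else 0 := by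
  induction n with
  | zero =>
    intro i j
    simp [Matrix.one_apply, Fin.ext_iff, mu, eq_comm]
  | succ n ih =>
    intro i j
    rw [pow_succ, Matrix.mul_apply]
    have hterm : ∀ k : Fin p, (Dm p q ^ n) i k * Dm p q k j
        = if (k : ℕ) = (i : ℕ) + n then
            (if (j : ℕ) = (k : ℕ) + 1 then mu q (i : ℕ) n * lam q (j : ℕ) else 0) else 0 := by
      intro k
      rw [ih i k]
      unfold Dm
      split_ifs <;> simp_all <;> ring1
    rw [Finset.sum_congr rfl (fun k _ => hterm k), sum_fin_ite]
    have hi := i.isLt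
    have hj := j.isLt
    by_cases hin : (i : ℕ) + n < p
    · rw [dif_pos hin]
      by_cases hj2 : (j : ℕ) = (i : ℕ) + n + 1
      · rw [if_pos hj2, if_pos (show (j : ℕ) = (i : ℕ) + (n + 1) by omega), hj2]
        unfold mu
        rw [Finset.prod_range_succ]
        ring_nf
      · rw [if_neg hj2, if_neg (show ¬ (j : ℕ) = (i : ℕ) + (n + 1) by omega)]
    · rw [dif_neg hin, if_neg (by omega)]


lemma Zm_pow_p : Zm p ^ p = 0 := by
  ext i j
  rw [Zm_pow]
  have hi := i.isLt
  rw [if_neg (by omega)]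
  rfl

lemma Dm_pow_p : Dm p q ^ p = 0 := by
  ext i j
  rw [Dm_pow]
  have hj := j.isLt
  rw [if_neg (by omega)]
  rfl

lemma lam_p (hq0 : q ≠ 0) (hqp : q ^ (2 * p) = 1) : lam q p = 0 := by
  rw [lam_eq_zero_iff q hq0]; exact hqp

lemma Dm_mul_Zm (hq0 : q ≠ 0) (hqp : q ^ (2 * p) = 1) :
    Dm p q * Zm p = (q - q⁻¹) • 1 + (q⁻¹ ^ 2) • (Zm p * Dm p q) := by
  ext i j
  have hi := i.isLt
  have hj := j.isLt
  rw [Matrix.mul_apply]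
  have hterm : ∀ k : Fin p, Dm p q i k * Zm p k j
      = if (k : ℕ) = (i : ℕ) + 1 then
          (if (k : ℕ) = (j : ℕ) + 1 then lam q (k : ℕ) else 0) else 0 := by
    intro k
    unfold Dm Zm
    split_ifs <;> ring
  rw [Finset.sum_congr rfl (fun k _ => hterm k), sum_fin_ite]
  have hRD : (Zm p * Dm p q) i j
      = if (j : ℕ) = (i : ℕ) ∧ 1 ≤ (i : ℕ) then lam q (i : ℕ) else 0 := by
    rw [Matrix.mul_apply]
    rcases Nat.eq_zero_or_pos (i : ℕ) with h0 | hpos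
    · rw [Finset.sum_eq_zero, if_neg (by omega)]
      intro k _
      unfold Zm
      rw [if_neg (by omega), zero_mul]
    · obtain ⟨i', hi'⟩ : ∃ i', (i : ℕ) = i' + 1 := ⟨(i : ℕ) - 1, by omega⟩
      have hterm2 : ∀ k : Fin p, Zm p i k * Dm p q k j
          = if (k : ℕ) = i' then (if (j : ℕ) = (k : ℕ) + 1 then lam q (j : ℕ) else 0) else 0 := by
        intro k
        unfold Zm Dm
        split_ifs <;> first | ring1 | (exfalso; omega)
      rw [Finset.sum_congr rfl (fun k _ => hterm2 k), sum_fin_ite]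
      rw [dif_pos (by omega : i' < p)]
      by_cases hji : (j : ℕ) = (i : ℕ) ∧ 1 ≤ (i : ℕ)
      · rw [if_pos (show (j : ℕ) = i' + 1 by omega), if_pos hji]
        congr 1
        omega
      · rw [if_neg (show ¬ (j : ℕ) = i' + 1 by omega), if_neg hji]
  rw [Matrix.add_apply, Matrix.smul_apply, Matrix.smul_apply, Matrix.one_apply, hRD]
  by_cases hij : (i : ℕ) = (j : ℕ)
  · have hij' : i = j := Fin.ext hij
    rw [if_pos hij']
    by_cases h1 : (i : ℕ) + 1 < p
    · rw [dif_pos h1, if_pos (by omega : ((i : ℕ) + 1 : ℕ) = (j : ℕ) + 1)]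
      by_cases hi1 : 1 ≤ (i : ℕ)
      · rw [if_pos ⟨hij.symm, hi1⟩]
        have := lam_succ q hq0 (i : ℕ)
        simp only [smul_eq_mul, mul_one]
        rw [this]
      · have hi0 : (i : ℕ) = 0 := by omega
        rw [if_neg (by omega)]
        simp only [smul_eq_mul, mul_one, smul_zero, mul_zero, add_zero, hi0]
        rw [zero_add, lam_one q hq0]
    · -- i = p - 1
      rw [dif_neg h1]
      by_cases hi1 : 1 ≤ (i : ℕ)
      · rw [if_pos ⟨hij.symm, hi1⟩]
        simp only [smul_eq_mul, mul_one]
        have hp0 : lam q ((i : ℕ) + 1) = 0 := by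
          have : (i : ℕ) + 1 = p := by omega
          rw [this]; exact lam_p p q hq0 hqp
        rw [lam_succ q hq0 (i : ℕ)] at hp0
        linear_combination -hp0
      · -- p = 1 impossible? i = 0 and i+1 >= p means p = 1
        have hp1 : p = 1 := by omega
        rw [if_neg (by omega)]
        simp only [smul_eq_mul, mul_one, mul_zero, add_zero]
        have hp0 : lam q 1 = 0 := by
          have : (1 : ℕ) = p := hp1.symm
          rw [this]; exact lam_p p q hq0 hqp
        rw [lam_one q hq0] at hp0
        linear_combination -hp0
  · rw [if_neg (fun h => hij (Fin.ext_iff.mp h))]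
    rw [if_neg (fun h => hij (by omega))]
    by_cases h1 : (i : ℕ) + 1 < p
    · rw [dif_pos h1, if_neg (by omega : ¬ ((i : ℕ) + 1 : ℕ) = (j : ℕ) + 1)]
      simp
    · rw [dif_neg h1]
      simp

lemma ZD_entry (m n : ℕ) (i j : Fin p) :
    (Zm p ^ m * Dm p q ^ n) i j =
      if m ≤ (i : ℕ) ∧ (j : ℕ) = ((i : ℕ) - m) + n then mu q ((i : ℕ) - m) n else 0 := by
  rw [Matrix.mul_apply]
  by_cases hm : m ≤ (i : ℕ)
  · have hterm : ∀ k : Fin p, (Zm p ^ m) i k * (Dm p q ^ n) k j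
        = if (k : ℕ) = (i : ℕ) - m then
            (if (j : ℕ) = (k : ℕ) + n then mu q (k : ℕ) n else 0) else 0 := by
      intro k
      rw [Zm_pow, Dm_pow]
      split_ifs <;> first | ring1 | (exfalso; omega)
    rw [Finset.sum_congr rfl (fun k _ => hterm k), sum_fin_ite]
    rw [dif_pos (show (i : ℕ) - m < p by have := i.isLt; omega)]
    by_cases hj : (j : ℕ) = ((i : ℕ) - m) + n
    · rw [if_pos hj, if_pos ⟨hm, hj⟩]
    · rw [if_neg hj, if_neg (fun h => hj h.2)]
  · rw [if_neg (fun h => hm h.1)]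
    apply Finset.sum_eq_zero
    intro k _
    rw [Zm_pow, if_neg (by omega), zero_mul]

lemma mu_ne_zero (hq0 : q ≠ 0) (hprim : ∀ s : ℕ, 1 ≤ s → s < p → q ^ (2 * s) ≠ 1)
    (i n : ℕ) (h : i + n < p) : mu q i n ≠ 0 := by
  unfold mu
  rw [Finset.prod_ne_zero_iff]
  intro t ht
  rw [Finset.mem_range] at ht
  rw [Ne, lam_eq_zero_iff q hq0]
  exact hprim (i + 1 + t) (by omega) (by omega)

lemma mat_li (hq0 : q ≠ 0) (hprim : ∀ s : ℕ, 1 ≤ s → s < p → q ^ (2 * s) ≠ 1) :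
    LinearIndependent ℂ
      (fun mn : Fin p × Fin p => Zm p ^ ((mn.1 : ℕ)) * Dm p q ^ ((mn.2 : ℕ))) := by
  rw [Fintype.linearIndependent_iff]
  intro c hc
  have key : ∀ m : ℕ, ∀ hm : m < p, ∀ n : Fin p, c (⟨m, hm⟩, n) = 0 := by
    intro m
    induction m using Nat.strong_induction_on with
    | _ m ih =>
      intro hm n
      have h0 : (∑ mn : Fin p × Fin p,
          c mn • (Zm p ^ ((mn.1 : ℕ)) * Dm p q ^ ((mn.2 : ℕ)))) (⟨m, hm⟩ : Fin p) n = 0 := by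
        rw [hc]; rfl
      rw [Matrix.sum_apply] at h0
      have hterm : ∀ mn : Fin p × Fin p,
          (c mn • (Zm p ^ ((mn.1 : ℕ)) * Dm p q ^ ((mn.2 : ℕ)))) (⟨m, hm⟩ : Fin p) n
          = c mn * (if (mn.1 : ℕ) ≤ m ∧ (n : ℕ) = (m - (mn.1 : ℕ)) + (mn.2 : ℕ)
              then mu q (m - (mn.1 : ℕ)) (mn.2 : ℕ) else 0) := by
        intro mn
        rw [Matrix.smul_apply, ZD_entry, smul_eq_mul]
      rw [Finset.sum_congr rfl (fun mn _ => hterm mn)] at h0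
      rw [Finset.sum_eq_single ((⟨m, hm⟩, n) : Fin p × Fin p)] at h0
      · simp only [Nat.sub_self, le_refl, Nat.zero_add, true_and] at h0
        rw [if_true] at h0
        have hmu : mu q 0 (n : ℕ) ≠ 0 := mu_ne_zero p q hq0 hprim 0 n (by omega)
        exact (mul_eq_zero.mp h0).resolve_right hmu
      · intro b _ hb
        by_cases hcond : (b.1 : ℕ) ≤ m ∧ (n : ℕ) = (m - (b.1 : ℕ)) + (b.2 : ℕ)
        · have hlt : (b.1 : ℕ) < m := by
            rcases Nat.lt_or_ge (b.1 : ℕ) m with h | h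
            · exact h
            · exfalso
              have hbm : (b.1 : ℕ) = m := le_antisymm hcond.1 h
              have hbn : (b.2 : ℕ) = (n : ℕ) := by omega
              exact hb (Prod.ext (Fin.ext hbm) (Fin.ext hbn))
          have : c (⟨(b.1 : ℕ), b.1.isLt⟩, b.2) = 0 := ih (b.1 : ℕ) hlt b.1.isLt b.2
          simp only [Fin.eta] at this
          rw [this, zero_mul]
        · rw [if_neg hcond, mul_zero]
      · intro habs
        exact absurd (Finset.mem_univ _) habs
  intro mn
  have := key (mn.1 : ℕ) mn.1.isLt mn.2
  simpa using this




lemma zbar_eq : zbar q p = RingQuot.mkAlgHom ℂ (CqBarRel q p) (FreeAlgebra.ι ℂ 0) := by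
  rw [zbar, ← RingQuot.mkAlgHom_coe ℂ]
  rfl

lemma dbar_eq : dbar q p = RingQuot.mkAlgHom ℂ (CqBarRel q p) (FreeAlgebra.ι ℂ 1) := by
  rw [dbar, ← RingQuot.mkAlgHom_coe ℂ]
  rfl

lemma rel_zd : dbar q p * zbar q p
    = (q - q⁻¹) • 1 + (q⁻¹ ^ 2) • (zbar q p * dbar q p) := by
  have h := RingQuot.mkAlgHom_rel ℂ (CqBarRel.main (q := q) (p := p))
  simp only [map_mul, map_add, map_smul, map_one] at h
  rw [zbar_eq, dbar_eq]
  exact h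

lemma zbar_pow_p : zbar q p ^ p = 0 := by
  have h := RingQuot.mkAlgHom_rel ℂ (CqBarRel.zp (q := q) (p := p))
  simp only [map_pow, map_zero] at h
  rw [zbar_eq]
  exact h

lemma dbar_pow_p : dbar q p ^ p = 0 := by
  have h := RingQuot.mkAlgHom_rel ℂ (CqBarRel.dp (q := q) (p := p))
  simp only [map_pow, map_zero] at h
  rw [dbar_eq]
  exact h

lemma mk_mem_adjoin (y : FreeAlgebra ℂ (Fin 2)) :
    RingQuot.mkAlgHom ℂ (CqBarRel q p) y ∈ Algebra.adjoin ℂ {zbar q p, dbar q p} := by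
  induction y using FreeAlgebra.induction with
  | grade0 r =>
    rw [AlgHom.commutes]
    exact Subalgebra.algebraMap_mem _ r
  | grade1 i =>
    fin_cases i
    · simp only [Fin.zero_eta]
      rw [← zbar_eq p q]
      exact Algebra.subset_adjoin (Set.mem_insert _ _)
    · simp only [Fin.mk_one]
      rw [← dbar_eq p q]
      exact Algebra.subset_adjoin (Set.mem_insert_of_mem _ rfl)
  | mul a b ha hb =>
    rw [map_mul]
    exact mul_mem ha hb
  | add a b ha hb =>
    rw [map_add]
    exact add_mem ha hb

lemma lam_zero' (q : ℂ) : lam q 0 = 0 := by simp [lam]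

lemma lam_one' (hq0 : q ≠ 0) : lam q 1 = q - q⁻¹ := by
  unfold lam; field_simp

lemma lam_succ'' (hq0 : q ≠ 0) (k : ℕ) :
    lam q (k + 1) = lam q k + (q - q⁻¹) * (q⁻¹ ^ 2) ^ k := by
  unfold lam; field_simp; linear_combination (-(1 / q ^ 2) ^ k) * mul_one_div_cancel (pow_ne_zero 2 hq0)

lemma rel_zd' (hq0 : q ≠ 0) : dbar q p * zbar q p
    = lam q 1 • 1 + (q⁻¹ ^ 2) • (zbar q p * dbar q p) := by
  rw [lam_one' q hq0]
  exact rel_zd p q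

lemma d_z_pow (hq0 : q ≠ 0) (m : ℕ) :
    dbar q p * zbar q p ^ (m + 1)
      = lam q (m + 1) • zbar q p ^ m
        + ((q⁻¹ ^ 2) ^ (m + 1)) • (zbar q p ^ (m + 1) * dbar q p) := by
  induction m with
  | zero =>
    simp only [zero_add, pow_one, pow_zero]
    exact rel_zd' p q hq0
  | succ m ih =>
    calc dbar q p * zbar q p ^ (m + 2)
        = (dbar q p * zbar q p ^ (m + 1)) * zbar q p := by
          rw [pow_succ, ← mul_assoc]
      _ = (lam q (m + 1) • zbar q p ^ m
            + ((q⁻¹ ^ 2) ^ (m + 1)) • (zbar q p ^ (m + 1) * dbar q p)) * zbar q p := by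
          rw [ih]
      _ = lam q (m + 1) • (zbar q p ^ m * zbar q p)
            + ((q⁻¹ ^ 2) ^ (m + 1)) • (zbar q p ^ (m + 1) * (dbar q p * zbar q p)) := by
          rw [add_mul, smul_mul_assoc, smul_mul_assoc, mul_assoc]
      _ = lam q (m + 1) • zbar q p ^ (m + 1)
            + ((q⁻¹ ^ 2) ^ (m + 1)) • (zbar q p ^ (m + 1)
                * (lam q 1 • 1 + (q⁻¹ ^ 2) • (zbar q p * dbar q p))) := by
          rw [← pow_succ, rel_zd' p q hq0]
      _ = lam q (m + 2) • zbar q p ^ (m + 1)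
            + ((q⁻¹ ^ 2) ^ (m + 2)) • (zbar q p ^ (m + 2) * dbar q p) := by
          rw [mul_add, mul_smul_comm, mul_smul_comm, mul_one, ← mul_assoc, ← pow_succ]
          rw [lam_succ'' q hq0 (m + 1), lam_one' q hq0]
          module

lemma adjoin_zd : Algebra.adjoin ℂ {zbar q p, dbar q p} = ⊤ := by
  rw [eq_top_iff]
  intro x _
  obtain ⟨y, rfl⟩ := RingQuot.mkAlgHom_surjective ℂ (CqBarRel q p) x
  exact mk_mem_adjoin p q y

noncomputable def vmon : Fin p × Fin p → RingQuot (CqBarRel q p) :=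
  fun mn => zbar q p ^ ((mn.1 : ℕ)) * dbar q p ^ ((mn.2 : ℕ))

lemma one_mem_S (hp : 0 < p) :
    (1 : RingQuot (CqBarRel q p)) ∈ Submodule.span ℂ (Set.range (vmon p q)) := by
  have h : vmon p q (⟨0, hp⟩, ⟨0, hp⟩) = 1 := by simp [vmon]
  rw [← h]
  exact Submodule.subset_span ⟨_, rfl⟩

lemma z_mul_mem (mn : Fin p × Fin p) :
    zbar q p * vmon p q mn ∈ Submodule.span ℂ (Set.range (vmon p q)) := by
  obtain ⟨m, n⟩ := mn
  show zbar q p * (zbar q p ^ ((m : ℕ)) * dbar q p ^ ((n : ℕ))) ∈ _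
  rw [← mul_assoc, ← pow_succ']
  by_cases h : (m : ℕ) + 1 < p
  · exact Submodule.subset_span ⟨(⟨(m : ℕ) + 1, h⟩, n), rfl⟩
  · have he : (m : ℕ) + 1 = p := by have := m.isLt; omega
    rw [he, zbar_pow_p, zero_mul]
    exact zero_mem _

lemma d_pow_succ_mem (hp : 0 < p) (n : Fin p) :
    dbar q p ^ ((n : ℕ) + 1) ∈ Submodule.span ℂ (Set.range (vmon p q)) := by
  by_cases h : (n : ℕ) + 1 < p
  · have hv : vmon p q (⟨0, hp⟩, ⟨(n : ℕ) + 1, h⟩) = dbar q p ^ ((n : ℕ) + 1) := by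
      simp [vmon]
    rw [← hv]
    exact Submodule.subset_span ⟨_, rfl⟩
  · have he : (n : ℕ) + 1 = p := by have := n.isLt; omega
    rw [he, dbar_pow_p]
    exact zero_mem _

lemma d_mul_mem (hq0 : q ≠ 0) (hp : 0 < p) (mn : Fin p × Fin p) :
    dbar q p * vmon p q mn ∈ Submodule.span ℂ (Set.range (vmon p q)) := by
  obtain ⟨m, n⟩ := mn
  show dbar q p * (zbar q p ^ ((m : ℕ)) * dbar q p ^ ((n : ℕ))) ∈ _
  rcases Nat.eq_zero_or_pos (m : ℕ) with h0 | hpos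
  · rw [h0, pow_zero, one_mul, ← pow_succ']
    exact d_pow_succ_mem p q hp n
  · obtain ⟨m', hm'⟩ : ∃ m', (m : ℕ) = m' + 1 := ⟨(m : ℕ) - 1, by omega⟩
    rw [hm', ← mul_assoc, d_z_pow p q hq0 m', add_mul, smul_mul_assoc, smul_mul_assoc,
      mul_assoc, ← pow_succ']
    apply add_mem
    · apply Submodule.smul_mem
      exact Submodule.subset_span ⟨(⟨m', by have := m.isLt; omega⟩, n), rfl⟩
    · apply Submodule.smul_mem
      by_cases h : (n : ℕ) + 1 < p
      · exact Submodule.subset_span ⟨(⟨m' + 1, by have := m.isLt; omega⟩, ⟨(n : ℕ) + 1, h⟩), rfl⟩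
      · have he : (n : ℕ) + 1 = p := by have := n.isLt; omega
        rw [he, dbar_pow_p, mul_zero]
        exact zero_mem _

lemma span_vmon_top (hp2 : 2 ≤ p) (hq0 : q ≠ 0) :
    Submodule.span ℂ (Set.range (vmon p q)) = ⊤ := by
  set S := Submodule.span ℂ (Set.range (vmon p q)) with hS
  have hp : 0 < p := by omega
  have hmul : ∀ a : RingQuot (CqBarRel q p), (∀ mn, a * vmon p q mn ∈ S) →
      ∀ y ∈ S, a * y ∈ S := by
    intro a ha y hy
    refine Submodule.span_induction ?_ ?_ ?_ ?_ hy
    · rintro x ⟨mn, rfl⟩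
      exact ha mn
    · rw [mul_zero]; exact zero_mem _
    · intro x y _ _ hx hy
      rw [mul_add]; exact add_mem hx hy
    · intro c x _ hx
      rw [mul_smul_comm]; exact Submodule.smul_mem _ _ hx
  let U : Subalgebra ℂ (RingQuot (CqBarRel q p)) :=
  { carrier := {x | x ∈ S ∧ ∀ y ∈ S, x * y ∈ S}
    mul_mem' := fun {a b} ha hb =>
      ⟨ha.2 b hb.1, fun y hy => by rw [mul_assoc]; exact ha.2 _ (hb.2 y hy)⟩
    one_mem' := ⟨one_mem_S p q hp, fun y hy => by rwa [one_mul]⟩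
    add_mem' := fun {a b} ha hb =>
      ⟨add_mem ha.1 hb.1, fun y hy => by rw [add_mul]; exact add_mem (ha.2 y hy) (hb.2 y hy)⟩
    zero_mem' := ⟨zero_mem _, fun y hy => by rw [zero_mul]; exact zero_mem _⟩
    algebraMap_mem' := by
      intro c
      constructor
      · rw [Algebra.algebraMap_eq_smul_one]
        exact Submodule.smul_mem _ _ (one_mem_S p q hp)
      · intro y hy
        rw [Algebra.algebraMap_eq_smul_one, smul_one_mul]
        exact Submodule.smul_mem _ _ hy }
  have hzU : zbar q p ∈ U := by
    constructor
    · have hv : vmon p q (⟨1, by omega⟩, ⟨0, hp⟩) = zbar q p := by simp [vmon]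
      rw [← hv]
      exact Submodule.subset_span ⟨_, rfl⟩
    · exact hmul _ (z_mul_mem p q)
  have hdU : dbar q p ∈ U := by
    constructor
    · have hv : vmon p q (⟨0, hp⟩, ⟨1, by omega⟩) = dbar q p := by simp [vmon]
      rw [← hv]
      exact Submodule.subset_span ⟨_, rfl⟩
    · exact hmul _ (d_mul_mem p q hq0 hp)
  have hadj : Algebra.adjoin ℂ {zbar q p, dbar q p} ≤ U := by
    rw [Algebra.adjoin_le_iff]
    rintro x (rfl | rfl)
    · exact hzU
    · exact hdU
  rw [eq_top_iff]
  intro x _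
  have hx : x ∈ Algebra.adjoin ℂ {zbar q p, dbar q p} := by
    rw [adjoin_zd]; trivial
  exact (hadj hx).1


noncomputable def fmat : FreeAlgebra ℂ (Fin 2) →ₐ[ℂ] Matrix (Fin p) (Fin p) ℂ :=
  FreeAlgebra.lift ℂ ![Zm p, Dm p q]

lemma fmat_rel (hq0 : q ≠ 0) (hqp : q ^ (2 * p) = 1) :
    ∀ ⦃x y⦄, CqBarRel q p x y → fmat p q x = fmat p q y := by
  intro x y h
  cases h with
  | main =>
    simp only [fmat, map_mul, map_add, map_smul, map_one, FreeAlgebra.lift_ι_apply,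
      Matrix.cons_val_zero, Matrix.cons_val_one, Matrix.head_cons]
    exact Dm_mul_Zm p q hq0 hqp
  | zp =>
    simp only [fmat, map_pow, map_zero, FreeAlgebra.lift_ι_apply, Matrix.cons_val_zero]
    exact Zm_pow_p p
  | dp =>
    simp only [fmat, map_pow, map_zero, FreeAlgebra.lift_ι_apply, Matrix.cons_val_one,
      Matrix.head_cons]
    exact Dm_pow_p p q

noncomputable def phi (hq0 : q ≠ 0) (hqp : q ^ (2 * p) = 1) :
    RingQuot (CqBarRel q p) →ₐ[ℂ] Matrix (Fin p) (Fin p) ℂ :=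
  RingQuot.liftAlgHom ℂ ⟨fmat p q, fmat_rel p q hq0 hqp⟩

lemma phi_z (hq0 : q ≠ 0) (hqp : q ^ (2 * p) = 1) :
    phi p q hq0 hqp (zbar q p) = Zm p := by
  rw [zbar_eq, phi, RingQuot.liftAlgHom_mkAlgHom_apply]
  simp [fmat]

lemma phi_d (hq0 : q ≠ 0) (hqp : q ^ (2 * p) = 1) :
    phi p q hq0 hqp (dbar q p) = Dm p q := by
  rw [dbar_eq, phi, RingQuot.liftAlgHom_mkAlgHom_apply]
  simp [fmat]


end Stmt10Aux

/-- for `q = e^{iπ/p}`, the monomials `z^m ∂^n`, `0 ≤ m, n ≤ p-1`,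
form a basis of `Ā = ℂ̄_q[z,∂]`, so `dim Ā = p²`. -/
theorem stmt10 (p : ℕ) (hp : 2 ≤ p) (q : ℂ)
    (hq : q = Complex.exp ((Real.pi : ℂ) * Complex.I / (p : ℂ))) :
    LinearIndependent ℂ
        (fun mn : Fin p × Fin p => zbar q p ^ (mn.1 : ℕ) * dbar q p ^ (mn.2 : ℕ)) ∧
    Submodule.span ℂ
        (Set.range fun mn : Fin p × Fin p => zbar q p ^ (mn.1 : ℕ) * dbar q p ^ (mn.2 : ℕ))
      = ⊤ ∧
    Module.finrank ℂ (RingQuot (CqBarRel q p)) = p ^ 2 := by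
  have hp0 : 0 < p := by omega
  have hpc : (p : ℂ) ≠ 0 := Nat.cast_ne_zero.mpr (by omega)
  have hpi : (Real.pi : ℂ) ≠ 0 := by exact_mod_cast Real.pi_ne_zero
  have hI : Complex.I ≠ 0 := Complex.I_ne_zero
  have hq0 : q ≠ 0 := by rw [hq]; exact Complex.exp_ne_zero _
  have hqp : q ^ (2 * p) = 1 := by
    rw [hq, ← Complex.exp_nat_mul]
    rw [show ((2 * p : ℕ) : ℂ) * ((Real.pi : ℂ) * Complex.I / (p : ℂ))
        = 2 * (Real.pi : ℂ) * Complex.I by push_cast; field_simp]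
    exact Complex.exp_two_pi_mul_I
  have hprim : ∀ s : ℕ, 1 ≤ s → s < p → q ^ (2 * s) ≠ 1 := by
    intro s h1 hs hcon
    rw [hq, ← Complex.exp_nat_mul, Complex.exp_eq_one_iff] at hcon
    obtain ⟨n, hn⟩ := hcon
    field_simp at hn
    have key : (s : ℂ) * (2 * (Real.pi : ℂ) * Complex.I)
        = ((n : ℂ) * (p : ℂ)) * (2 * (Real.pi : ℂ) * Complex.I) := by
      push_cast at hn ⊢
      linear_combination ((Real.pi : ℂ) * Complex.I) * hn
    have h2 : (s : ℂ) = (n : ℂ) * (p : ℂ) :=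
      mul_right_cancel₀ (by exact mul_ne_zero (mul_ne_zero two_ne_zero hpi) hI) key
    have h3 : (s : ℤ) = n * (p : ℤ) := by exact_mod_cast h2
    have h1' : (1 : ℤ) ≤ (s : ℤ) := by exact_mod_cast h1
    have hs' : (s : ℤ) < (p : ℤ) := by exact_mod_cast hs
    have hp' : (1 : ℤ) ≤ (p : ℤ) := by exact_mod_cast hp0
    rcases le_or_gt n 0 with hn0 | hn1
    · have : n * (p : ℤ) ≤ 0 := mul_nonpos_of_nonpos_of_nonneg hn0 (by linarith)
      linarith
    · have : (p : ℤ) ≤ n * (p : ℤ) := le_mul_of_one_le_left (by linarith) hn1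
      linarith
  have hli : LinearIndependent ℂ
      (fun mn : Fin p × Fin p => zbar q p ^ (mn.1 : ℕ) * dbar q p ^ (mn.2 : ℕ)) := by
    apply LinearIndependent.of_comp (Stmt10Aux.phi p q hq0 hqp).toLinearMap
    have hcomp : (⇑(Stmt10Aux.phi p q hq0 hqp).toLinearMap ∘
        fun mn : Fin p × Fin p => zbar q p ^ (mn.1 : ℕ) * dbar q p ^ (mn.2 : ℕ))
        = fun mn : Fin p × Fin p =>
            Stmt10Aux.Zm p ^ ((mn.1 : ℕ)) * Stmt10Aux.Dm p q ^ ((mn.2 : ℕ)) := by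
      funext mn
      simp only [Function.comp_apply, AlgHom.toLinearMap_apply, map_mul, map_pow,
        Stmt10Aux.phi_z p q hq0 hqp, Stmt10Aux.phi_d p q hq0 hqp]
    rw [hcomp]
    exact Stmt10Aux.mat_li p q hq0 hprim
  have hspan : Submodule.span ℂ
      (Set.range fun mn : Fin p × Fin p => zbar q p ^ (mn.1 : ℕ) * dbar q p ^ (mn.2 : ℕ))
      = ⊤ := Stmt10Aux.span_vmon_top p q hp hq0
  refine ⟨hli, hspan, ?_⟩
  have b : Module.Basis (Fin p × Fin p) ℂ (RingQuot (CqBarRel q p)) :=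
    Module.Basis.mk hli (by rw [hspan])
  rw [Module.finrank_eq_card_basis b, Fintype.card_prod, Fintype.card_fin, sq]
end

section
/- Let q = e^{iπ/p} and consider the U-action on Ā = ℂ̄_q[z,∂]. Define t = Σ_{i=1}^{p-1} (1/[i]_q)·z^i·∂^i. Then in Ā: E(t) = z and F(t) = ∂ (since z^p = ∂^p = 0, the correction terms q·z^p∂^{p-1} and q·z^{p-1}∂^p vanish). -/
lemma qpow_ne_one (p : ℕ) (hp : 2 ≤ p) (q : ℂ)
    (hq : q = Complex.exp ((Real.pi : ℂ) * Complex.I / (p : ℂ)))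
    (k : ℕ) (hk1 : 1 ≤ k) (hkp : k < p) : q ^ (2 * k) ≠ 1 := by
  intro h
  rw [hq, ← Complex.exp_nat_mul] at h
  obtain ⟨n, hn⟩ := Complex.exp_eq_one_iff.mp h
  have hpne : (p : ℂ) ≠ 0 := Nat.cast_ne_zero.mpr (by omega)
  have hπ : (Real.pi : ℂ) ≠ 0 := by exact_mod_cast Real.pi_ne_zero
  have hI := Complex.I_ne_zero
  have h2πI : (2 : ℂ) * (Real.pi : ℂ) * Complex.I ≠ 0 := by
    simp [hπ, hI, mul_ne_zero]
  have hk' : (k : ℂ) = n * p := by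
    push_cast at hn
    field_simp at hn
    have : (k : ℂ) * ((2:ℂ) * Real.pi * Complex.I) = ((n : ℂ) * p) * ((2:ℂ) * Real.pi * Complex.I) := by
      linear_combination ((2:ℂ) * Real.pi * Complex.I) * hn
    exact mul_right_cancel₀ h2πI this
  have hk2 : (k : ℤ) = n * p := by exact_mod_cast hk'
  have hp' : (1 : ℤ) ≤ p := by exact_mod_cast (by omega : 1 ≤ p)
  have hk1' : (1 : ℤ) ≤ k := by exact_mod_cast hk1
  have hkp' : (k : ℤ) < p := by exact_mod_cast hkp
  rcases le_or_gt n 0 with hn0 | hn0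
  · nlinarith
  · nlinarith

lemma qint_ne_zero (p : ℕ) (hp : 2 ≤ p) (q : ℂ)
    (hq : q = Complex.exp ((Real.pi : ℂ) * Complex.I / (p : ℂ)))
    (i : ℕ) (h1 : 1 ≤ i) (h2 : i < p) : qint q i ≠ 0 := by
  have hq0 : q ≠ 0 := by rw [hq]; exact Complex.exp_ne_zero _
  have hnum : q ^ i - q⁻¹ ^ i ≠ 0 := by
    rw [sub_ne_zero]
    intro h
    apply qpow_ne_one p hp q hq i h1 h2
    calc q ^ (2*i) = q ^ i * q ^ i := by rw [two_mul, pow_add]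
      _ = q ^ i * q⁻¹ ^ i := by rw [h]
      _ = (q * q⁻¹) ^ i := (mul_pow _ _ _).symm
      _ = 1 := by rw [mul_inv_cancel₀ hq0, one_pow]
  have hden : q - q⁻¹ ≠ 0 := by
    rw [sub_ne_zero]
    intro h
    apply qpow_ne_one p hp q hq 1 le_rfl (by omega)
    calc q ^ (2*1) = q * q := by ring
      _ = q * q⁻¹ := by nth_rewrite 2 [h]; rfl
      _ = 1 := mul_inv_cancel₀ hq0
  rw [qint]
  exact div_ne_zero hnum hden

/-- with the `U`-action on `Ā = ℂ̄_q[z,∂]` given on monomials by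
`E(z^m∂^n) = q^{1-n}[n]_q z^m∂^{n-1} - q^{m-2n}[m]_q z^{m+1}∂^n` and
`F(z^m∂^n) = q^{1-m}[m]_q z^{m-1}∂^n - q^{n-2m}[n]_q z^m∂^{n+1}`, the element
`t = Σ_{i=1}^{p-1} (1/[i]_q) z^i ∂^i` satisfies `E(t) = z` and `F(t) = ∂`. -/
theorem stmt14 (p : ℕ) (hp : 2 ≤ p) (q : ℂ)
    (hq : q = Complex.exp ((Real.pi : ℂ) * Complex.I / (p : ℂ)))
    (E F : Module.End ℂ (RingQuot (CqBarRel q p)))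
    (hE : ∀ m n : ℕ, E (zbar q p ^ m * dbar q p ^ n)
      = (q ^ (1 - (n : ℤ)) * qint q n) • (zbar q p ^ m * dbar q p ^ (n - 1))
        - (q ^ ((m : ℤ) - 2 * (n : ℤ)) * qint q m) • (zbar q p ^ (m + 1) * dbar q p ^ n))
    (hF : ∀ m n : ℕ, F (zbar q p ^ m * dbar q p ^ n)
      = (q ^ (1 - (m : ℤ)) * qint q m) • (zbar q p ^ (m - 1) * dbar q p ^ n)
        - (q ^ ((n : ℤ) - 2 * (m : ℤ)) * qint q n) • (zbar q p ^ m * dbar q p ^ (n + 1))) :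
    E (∑ i ∈ Finset.Icc 1 (p - 1), (qint q i)⁻¹ • (zbar q p ^ i * dbar q p ^ i))
        = zbar q p ∧
    F (∑ i ∈ Finset.Icc 1 (p - 1), (qint q i)⁻¹ • (zbar q p ^ i * dbar q p ^ i))
        = dbar q p := by
  have hz : zbar q p ^ p = 0 := by
    rw [zbar, ← map_pow, RingQuot.mkRingHom_rel CqBarRel.zp, map_zero]
  have hd : dbar q p ^ p = 0 := by
    rw [dbar, ← map_pow, RingQuot.mkRingHom_rel CqBarRel.dp, map_zero]
  have hqne : ∀ i : ℕ, 1 ≤ i → i ≤ p - 1 → qint q i ≠ 0 := fun i h1 h2 =>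
    qint_ne_zero p hp q hq i h1 (by omega)
  constructor
  · set f : ℕ → RingQuot (CqBarRel q p) :=
      fun i => q ^ (1 - (i:ℤ)) • (zbar q p ^ i * dbar q p ^ (i-1)) with hfdef
    have key : ∀ i ∈ Finset.Icc 1 (p-1),
        E ((qint q i)⁻¹ • (zbar q p ^ i * dbar q p ^ i)) = f i - f (i+1) := by
      intro i hi
      rw [Finset.mem_Icc] at hi
      have hqi := hqne i hi.1 hi.2
      rw [map_smul, hE i i, smul_sub, smul_smul, smul_smul, hfdef]
      have e1 : (qint q i)⁻¹ * (q ^ (1 - (i:ℤ)) * qint q i) = q ^ (1-(i:ℤ)) := by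
        field_simp
      have e2 : (qint q i)⁻¹ * (q ^ ((i:ℤ) - 2*(i:ℤ)) * qint q i) = q ^ (1-((i+1:ℕ):ℤ)) := by
        rw [show ((i:ℤ) - 2*(i:ℤ)) = 1 - ((i+1:ℕ):ℤ) by push_cast; ring]
        field_simp
      rw [e1, e2]
      rfl
    rw [map_sum, Finset.sum_congr rfl key, show Finset.Icc 1 (p-1) = Finset.Ico 1 p from by
        ext x; simp [Finset.mem_Icc, Finset.mem_Ico]; omega,
      Finset.sum_Ico_eq_sum_range,
      show p - 1 = p - 1 from rfl,
      show (∑ j ∈ Finset.range (p-1), (f (1+j) - f (1+j+1)))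
          = ∑ j ∈ Finset.range (p-1), (f (1+j) - f (1+(j+1))) from by
        simp [add_assoc],
      Finset.sum_range_sub' (fun j => f (1+j)) (p-1),
      show 1 + (p-1) = p from by omega, hfdef]
    simp [hz]
  · set f : ℕ → RingQuot (CqBarRel q p) :=
      fun i => q ^ (1 - (i:ℤ)) • (zbar q p ^ (i-1) * dbar q p ^ i) with hfdef
    have key : ∀ i ∈ Finset.Icc 1 (p-1),
        F ((qint q i)⁻¹ • (zbar q p ^ i * dbar q p ^ i)) = f i - f (i+1) := by
      intro i hi
      rw [Finset.mem_Icc] at hi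
      have hqi := hqne i hi.1 hi.2
      rw [map_smul, hF i i, smul_sub, smul_smul, smul_smul, hfdef]
      have e1 : (qint q i)⁻¹ * (q ^ (1 - (i:ℤ)) * qint q i) = q ^ (1-(i:ℤ)) := by
        field_simp
      have e2 : (qint q i)⁻¹ * (q ^ ((i:ℤ) - 2*(i:ℤ)) * qint q i) = q ^ (1-((i+1:ℕ):ℤ)) := by
        rw [show ((i:ℤ) - 2*(i:ℤ)) = 1 - ((i+1:ℕ):ℤ) by push_cast; ring]
        field_simp
      rw [e1, e2]
      rfl
    rw [map_sum, Finset.sum_congr rfl key, show Finset.Icc 1 (p-1) = Finset.Ico 1 p from by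
        ext x; simp [Finset.mem_Icc, Finset.mem_Ico]; omega,
      Finset.sum_Ico_eq_sum_range,
      show p - 1 = p - 1 from rfl,
      show (∑ j ∈ Finset.range (p-1), (f (1+j) - f (1+j+1)))
          = ∑ j ∈ Finset.range (p-1), (f (1+j) - f (1+(j+1))) from by
        simp [add_assoc],
      Finset.sum_range_sub' (fun j => f (1+j)) (p-1),
      show 1 + (p-1) = p from by omega, hfdef]
    simp [hd]
end

section
/- For each 1 ≤ r ≤ ⌊(p-1)/2⌋, the element b₁ = Σ_{i=0}^{p-r-1} ([r+i-1]_q!/[i]_q!)·q^{ri}·z^{i+r}·∂^i of Ā = ℂ̄_q[z,∂] satisfies E(b₁) = 0, where E acts on monomials by E(z^m∂^n) = q^{1-n}[n]_q z^m∂^{n-1} - q^{m-2n}[m]_q z^{m+1}∂^n. -/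
/-- Quantum factorial `[n]_q! = [1]_q [2]_q ⋯ [n]_q`. -/
noncomputable def qfact (q : ℂ) : ℕ → ℂ
  | 0 => 1
  | n + 1 => qfact q n * qint q (n + 1)

lemma num_ne (p k : ℕ) (hp : 2 ≤ p) (hk1 : 1 ≤ k) (hk2 : k < p) (q : ℂ)
    (hq : q = Complex.exp ((Real.pi : ℂ) * Complex.I / (p : ℂ))) :
    q ^ k - q⁻¹ ^ k ≠ 0 := by
  have hq0 : q ≠ 0 := hq ▸ Complex.exp_ne_zero _
  have hπ : (Real.pi : ℂ) ≠ 0 := by simpa using Real.pi_ne_zero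
  have hI : Complex.I ≠ 0 := Complex.I_ne_zero
  have hp0 : (p : ℂ) ≠ 0 := Nat.cast_ne_zero.mpr (by omega)
  intro h
  rw [sub_eq_zero] at h
  have h1 : q ^ (2 * k) = 1 := by
    rw [two_mul, pow_add]; nth_rewrite 2 [h]
    rw [← mul_pow, mul_inv_cancel₀ hq0, one_pow]
  have h3 : Complex.exp (((2 * k : ℕ) : ℂ) * ((Real.pi : ℂ) * Complex.I / (p : ℂ))) = 1 := by
    rw [Complex.exp_nat_mul, ← hq]; exact h1
  rw [Complex.exp_eq_one_iff] at h3
  obtain ⟨n, hn⟩ := h3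
  have hkn : ((k : ℤ) : ℂ) = ((n * p : ℤ) : ℂ) := by
    have h4 : (((k : ℤ) : ℂ) - ((n * p : ℤ) : ℂ)) * (2 * (Real.pi : ℂ) * Complex.I) = 0 := by
      field_simp at hn
      push_cast at hn ⊢
      linear_combination ((Real.pi : ℂ) * Complex.I) * hn
    rcases mul_eq_zero.mp h4 with h5 | h5
    · exact sub_eq_zero.mp h5
    · exfalso; simp [hπ, hI] at h5
  have hkn' : (k : ℤ) = n * p := Int.cast_injective hkn
  have hdvd : (p : ℤ) ∣ (k : ℤ) := ⟨n, by linarith⟩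
  have : p ∣ k := Int.ofNat_dvd.mp hdvd
  have := Nat.le_of_dvd (by omega) this
  omega

lemma qint_ne (p k : ℕ) (hp : 2 ≤ p) (hk1 : 1 ≤ k) (hk2 : k < p) (q : ℂ)
    (hq : q = Complex.exp ((Real.pi : ℂ) * Complex.I / (p : ℂ))) :
    qint q k ≠ 0 := by
  have hden : q - q⁻¹ ≠ 0 := by
    have := num_ne p 1 hp le_rfl (by omega) q hq
    simpa using this
  exact div_ne_zero (num_ne p k hp hk1 hk2 q hq) hden

lemma qfact_ne (p : ℕ) (hp : 2 ≤ p) (q : ℂ)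
    (hq : q = Complex.exp ((Real.pi : ℂ) * Complex.I / (p : ℂ))) :
    ∀ k, k < p → qfact q k ≠ 0 := by
  intro k
  induction k with
  | zero => intro _; simp [qfact]
  | succ n ih =>
    intro hn
    rw [qfact]
    exact mul_ne_zero (ih (by omega)) (qint_ne p (n+1) hp (by omega) hn q hq)

lemma zbar_pow (q : ℂ) (p : ℕ) : zbar q p ^ p = 0 := by
  unfold zbar
  rw [← map_pow, RingQuot.mkRingHom_rel CqBarRel.zp, map_zero]

/-- for `1 ≤ r ≤ ⌊(p-1)/2⌋`, the element
`b₁ = Σ_{i=0}^{p-r-1} ([r+i-1]_q!/[i]_q!) q^{ri} z^{i+r}∂^i` of `Ā = ℂ̄_q[z,∂]`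
satisfies `E(b₁) = 0`, where
`E(z^m∂^n) = q^{1-n}[n]_q z^m∂^{n-1} - q^{m-2n}[m]_q z^{m+1}∂^n`. -/
theorem stmt16 (p r : ℕ) (hp : 2 ≤ p) (hr1 : 1 ≤ r) (hr2 : r ≤ (p - 1) / 2) (q : ℂ)
    (hq : q = Complex.exp ((Real.pi : ℂ) * Complex.I / (p : ℂ)))
    (E : Module.End ℂ (RingQuot (CqBarRel q p)))
    (hE : ∀ m n : ℕ, E (zbar q p ^ m * dbar q p ^ n)
      = (q ^ (1 - (n : ℤ)) * qint q n) • (zbar q p ^ m * dbar q p ^ (n - 1))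
        - (q ^ ((m : ℤ) - 2 * (n : ℤ)) * qint q m) • (zbar q p ^ (m + 1) * dbar q p ^ n)) :
    E (∑ i ∈ Finset.range (p - r),
        (qfact q (r + i - 1) / qfact q i * q ^ (r * i)) • (zbar q p ^ (i + r) * dbar q p ^ i))
      = 0 := by
  have hq0 : q ≠ 0 := hq ▸ Complex.exp_ne_zero _
  obtain ⟨s, rfl⟩ := Nat.exists_eq_add_of_le hr1
  have hps : 2 * s + 3 ≤ p := by omega
  -- abbreviations
  set A : ℕ → ℂ := fun i =>
    qfact q (s + i) / qfact q i * q ^ ((1 + s) * i) * (q ^ (1 - (i : ℤ)) * qint q i) with hA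
  set B : ℕ → ℂ := fun i =>
    qfact q (s + i) / qfact q i * q ^ ((1 + s) * i)
      * (q ^ (((i + (1 + s) : ℕ) : ℤ) - 2 * (i : ℤ)) * qint q (i + (1 + s))) with hB
  set v : ℕ → RingQuot (CqBarRel q p) := fun i =>
    zbar q p ^ (i + (1 + s)) * dbar q p ^ (i - 1) with hv
  have key : ∀ i ∈ Finset.range (p - (1 + s)),
      E ((qfact q (1 + s + i - 1) / qfact q i * q ^ ((1 + s) * i))
          • (zbar q p ^ (i + (1 + s)) * dbar q p ^ i))
        = A i • v i - B i • v (i + 1) := by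
    intro i _
    rw [map_smul, hE (i + (1 + s)) i, smul_sub, smul_smul, smul_smul]
    have e1 : 1 + s + i - 1 = s + i := by omega
    have e2 : i + (1 + s) + 1 = (i + 1) + (1 + s) := by omega
    rw [e1, e2]
    rfl
  rw [map_sum, Finset.sum_congr rfl key, Finset.sum_sub_distrib, sub_eq_zero]
  obtain ⟨M, hM⟩ : ∃ M, p - (1 + s) = M + 1 := ⟨p - (1 + s) - 1, by omega⟩
  rw [hM, Finset.sum_range_succ', Finset.sum_range_succ]
  have hA0 : A 0 = 0 := by simp [hA, qint]
  have hvM : v (M + 1) = 0 := by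
    have : (M + 1) + (1 + s) = p := by omega
    simp [hv, this, zbar_pow, zero_mul]
  rw [hA0, hvM, zero_smul, smul_zero, add_zero, add_zero]
  refine Finset.sum_congr rfl fun i hi => ?_
  have hiM : i < M := Finset.mem_range.mp hi
  congr 1
  -- coefficient identity  A (i+1) = B i
  have hf1 : qfact q i ≠ 0 := qfact_ne p hp q hq i (by omega)
  have hf2 : qint q (i + 1) ≠ 0 := qint_ne p (i + 1) hp (by omega) (by omega) q hq
  have hqi : q ^ i ≠ 0 := pow_ne_zero _ hq0
  rw [hA, hB]
  simp only
  have e3 : s + (i + 1) = (s + i) + 1 := by omega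
  rw [e3, qfact, qfact]
  have e4 : (1 : ℤ) - ((i + 1 : ℕ) : ℤ) = -(i : ℤ) := by push_cast; ring
  have e5 : ((i + (1 + s) : ℕ) : ℤ) - 2 * (i : ℤ) = ((s + 1 : ℕ) : ℤ) + (-(i : ℤ)) := by
    push_cast; ring
  have e6 : (1 + s) * (i + 1) = (1 + s) * i + (s + 1) := by ring
  rw [e4, e5, e6, pow_add, zpow_add₀ hq0, zpow_neg, zpow_natCast, zpow_natCast]
  have e7 : i + (1 + s) = s + i + 1 := by omega
  rw [e7]
  field_simp
end

section
/- Let Ω be the associative unital algebra on generators z, ∂, ζ, δ with relations ∂z = q - q⁻¹ + q⁻²z∂, ζ² = 0, δ² = 0, δζ = -q⁻²ζδ, ζz = q⁻²zζ, δ∂ = q²∂δ, ζ∂ = q²∂ζ, δz = q⁻²zδ. Define the linear map d by d(z) = ζ, d(∂) = δ, d(ζ) = d(δ) = 0, d(1) = 0, extended as a graded derivation (where ζ, δ have degree 1 and z, ∂ have degree 0). Then d is well defined on Ω (it preserves the defining ideal), d² = 0, and d(z^m) = q^{1-m}[m]_q z^{m-1}ζ, d(∂^n) = q^{n-1}[n]_q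 ∂^{n-1}δ. -/
/-- The defining relations of `Ω`: generators `0 = z`, `1 = ∂`, `2 = ζ`, `3 = δ`,
with `∂z = (q-q⁻¹)·1 + q⁻² z∂`, `ζ² = δ² = 0`, `δζ = -q⁻² ζδ`,
`ζz = q⁻² zζ`, `δ∂ = q² ∂δ`, `ζ∂ = q² ∂ζ`, `δz = q⁻² zδ`. -/
inductive OmRel (q : ℂ) : FreeAlgebra ℂ (Fin 4) → FreeAlgebra ℂ (Fin 4) → Prop
  | dz : OmRel q (FreeAlgebra.ι ℂ 1 * FreeAlgebra.ι ℂ 0)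
      ((q - q⁻¹) • (1 : FreeAlgebra ℂ (Fin 4))
        + (q⁻¹ ^ 2) • (FreeAlgebra.ι ℂ 0 * FreeAlgebra.ι ℂ 1))
  | zeta2 : OmRel q (FreeAlgebra.ι ℂ 2 * FreeAlgebra.ι ℂ 2) 0
  | delta2 : OmRel q (FreeAlgebra.ι ℂ 3 * FreeAlgebra.ι ℂ 3) 0
  | deltazeta : OmRel q (FreeAlgebra.ι ℂ 3 * FreeAlgebra.ι ℂ 2)
      ((-(q⁻¹ ^ 2)) • (FreeAlgebra.ι ℂ 2 * FreeAlgebra.ι ℂ 3))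
  | zetaz : OmRel q (FreeAlgebra.ι ℂ 2 * FreeAlgebra.ι ℂ 0)
      ((q⁻¹ ^ 2) • (FreeAlgebra.ι ℂ 0 * FreeAlgebra.ι ℂ 2))
  | deltad : OmRel q (FreeAlgebra.ι ℂ 3 * FreeAlgebra.ι ℂ 1)
      ((q ^ 2) • (FreeAlgebra.ι ℂ 1 * FreeAlgebra.ι ℂ 3))
  | zetad : OmRel q (FreeAlgebra.ι ℂ 2 * FreeAlgebra.ι ℂ 1)
      ((q ^ 2) • (FreeAlgebra.ι ℂ 1 * FreeAlgebra.ι ℂ 2))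
  | deltaz : OmRel q (FreeAlgebra.ι ℂ 3 * FreeAlgebra.ι ℂ 0)
      ((q⁻¹ ^ 2) • (FreeAlgebra.ι ℂ 0 * FreeAlgebra.ι ℂ 3))

/-- The images of the generators `z`, `∂`, `ζ`, `δ` in `Ω`. -/
noncomputable def omGen (q : ℂ) (i : Fin 4) : RingQuot (OmRel q) :=
  RingQuot.mkRingHom (OmRel q) (FreeAlgebra.ι ℂ i)

namespace S17
variable (q : ℂ)

abbrev Om (q : ℂ) := RingQuot (OmRel q)

noncomputable def mk : FreeAlgebra ℂ (Fin 4) →ₐ[ℂ] Om q := RingQuot.mkAlgHom ℂ (OmRel q)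

lemma omGen_eq (i : Fin 4) : omGen q i = mk q (FreeAlgebra.ι ℂ i) := by
  rw [omGen, mk, ← RingQuot.mkAlgHom_coe ℂ]; rfl

lemma mk_rel {a b} (h : OmRel q a b) : mk q a = mk q b := RingQuot.mkAlgHom_rel ℂ h

lemma neg_eq_smul (a : Om q) : -a = (-1 : ℂ) • a := (neg_one_smul ℂ a).symm

lemma rel_dz : omGen q 1 * omGen q 0
    = (q - q⁻¹) • 1 + (q⁻¹ ^ 2) • (omGen q 0 * omGen q 1) := by
  simp only [omGen_eq, ← map_mul]; rw [mk_rel q OmRel.dz]; simp [map_add, map_smul]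

lemma rel_zeta2 : omGen q 2 * omGen q 2 = 0 := by
  simp only [omGen_eq, ← map_mul]; rw [mk_rel q OmRel.zeta2, map_zero]

lemma rel_delta2 : omGen q 3 * omGen q 3 = 0 := by
  simp only [omGen_eq, ← map_mul]; rw [mk_rel q OmRel.delta2, map_zero]

lemma rel_deltazeta : omGen q 3 * omGen q 2 = (-(q⁻¹ ^ 2)) • (omGen q 2 * omGen q 3) := by
  simp only [omGen_eq, ← map_mul]; rw [mk_rel q OmRel.deltazeta, map_smul, map_mul]

lemma rel_zetaz : omGen q 2 * omGen q 0 = (q⁻¹ ^ 2) • (omGen q 0 * omGen q 2) := by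
  simp only [omGen_eq, ← map_mul]; rw [mk_rel q OmRel.zetaz, map_smul, map_mul]

lemma rel_deltad : omGen q 3 * omGen q 1 = (q ^ 2) • (omGen q 1 * omGen q 3) := by
  simp only [omGen_eq, ← map_mul]; rw [mk_rel q OmRel.deltad, map_smul, map_mul]

lemma rel_zetad : omGen q 2 * omGen q 1 = (q ^ 2) • (omGen q 1 * omGen q 2) := by
  simp only [omGen_eq, ← map_mul]; rw [mk_rel q OmRel.zetad, map_smul, map_mul]

lemma rel_deltaz : omGen q 3 * omGen q 0 = (q⁻¹ ^ 2) • (omGen q 0 * omGen q 3) := by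
  simp only [omGen_eq, ← map_mul]; rw [mk_rel q OmRel.deltaz, map_smul, map_mul]

/-- images of generators under the parity map -/
noncomputable def sgen : Fin 4 → Om q := ![omGen q 0, omGen q 1, -omGen q 2, -omGen q 3]

noncomputable def sigma : Om q →ₐ[ℂ] Om q :=
  RingQuot.liftAlgHom ℂ ⟨FreeAlgebra.lift ℂ (sgen q), by
    intro x y h
    induction h <;>
      simp only [map_mul, map_add, map_smul, map_zero, map_one, FreeAlgebra.lift_ι_apply,
        sgen, Matrix.cons_val_zero, Matrix.cons_val_one, Matrix.head_cons,
        Matrix.cons_val_two, Matrix.tail_cons, Matrix.cons_val_three,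
        neg_eq_smul, smul_mul_assoc, mul_smul_comm, smul_smul]
    all_goals first
      | exact rel_dz q
      | (rw [rel_zeta2]; simp)
      | (rw [rel_delta2]; simp)
      | (rw [rel_deltazeta]; module)
      | (rw [rel_zetaz]; module)
      | (rw [rel_deltad]; module)
      | (rw [rel_zetad]; module)
      | (rw [rel_deltaz]; module)
      | module⟩

lemma sigma_gen (i : Fin 4) : sigma q (omGen q i) = sgen q i := by
  rw [omGen_eq, sigma, mk]
  exact (RingQuot.liftAlgHom_mkAlgHom_apply ℂ _ _ _).trans (FreeAlgebra.lift_ι_apply _ _)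

/-- The σ-twisted bimodule: `Om q` with left action through `σ`, right action by
multiplication. -/
def Mod (q : ℂ) : Type := Om q

noncomputable instance : AddCommGroup (Mod q) := inferInstanceAs (AddCommGroup (Om q))
noncomputable instance : Module ℂ (Mod q) := inferInstanceAs (Module ℂ (Om q))
noncomputable instance : Module (Om q) (Mod q) :=
  Module.compHom (Om q) (sigma q).toRingHom
noncomputable instance : Module (Om q)ᵐᵒᵖ (Mod q) :=
  inferInstanceAs (Module (Om q)ᵐᵒᵖ (Om q))

lemma smul_mod (a : Om q) (m : Mod q) : a • m = sigma q a * (show Om q from m) := rfl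
lemma op_smul_mod (a : Om q) (m : Mod q) :
    MulOpposite.op a • m = (show Om q from m) * a := rfl
lemma csmul_mod (c : ℂ) (m : Mod q) : c • m = c • (show Om q from m) := rfl

instance : SMulCommClass (Om q) (Om q)ᵐᵒᵖ (Mod q) :=
  ⟨fun a b m => (mul_assoc (sigma q a) (show Om q from m) b.unop).symm⟩
instance : IsScalarTower ℂ (Om q) (Mod q) :=
  ⟨fun c a m =>
    show sigma q (c • a) * (show Om q from m) = c • (sigma q a * (show Om q from m)) by
      rw [map_smul, smul_mul_assoc]⟩
instance : IsScalarTower ℂ (Om q)ᵐᵒᵖ (Mod q) :=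
  ⟨fun c b m =>
    show (show Om q from m) * (c • b).unop = c • ((show Om q from m) * b.unop) by
      rw [MulOpposite.unop_smul, mul_smul_comm]⟩

abbrev T (q : ℂ) := TrivSqZeroExt (Om q) (Mod q)

/-- images of generators under `d` -/
noncomputable def dgen : Fin 4 → Om q := ![omGen q 2, omGen q 3, 0, 0]

noncomputable def phiGen (i : Fin 4) : T q := ⟨omGen q i, show Mod q from dgen q i⟩

lemma fst_phiGen (i : Fin 4) : (phiGen q i).fst = omGen q i := rfl
lemma snd_phiGen (i : Fin 4) : (show Om q from (phiGen q i).snd) = dgen q i := rfl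

/-- identity map from the twisted bimodule to `Om q` -/
def toOm (m : Mod q) : Om q := m

lemma mod_eq_iff (a b : Mod q) : (a = b) = (toOm q a = toOm q b) := rfl
lemma toOm_add (a b : Mod q) : toOm q (a + b) = toOm q a + toOm q b := rfl
lemma toOm_zero : toOm q (0 : Mod q) = 0 := rfl
lemma toOm_smul (a : Om q) (m : Mod q) : toOm q (a • m) = sigma q a * toOm q m := rfl
lemma toOm_opsmul (a : Om q) (m : Mod q) :
    toOm q (MulOpposite.op a • m) = toOm q m * a := rfl
lemma toOm_csmul (c : ℂ) (m : Mod q) : toOm q (c • m) = c • toOm q m := rfl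
lemma toOm_snd_phiGen (i : Fin 4) : toOm q (phiGen q i).snd = dgen q i := rfl

noncomputable def Phi (hq : q ≠ 0) : Om q →ₐ[ℂ] T q :=
  RingQuot.liftAlgHom ℂ ⟨FreeAlgebra.lift ℂ (phiGen q), by
    intro x y h
    have hq2 : (q : ℂ) ^ 2 ≠ 0 := pow_ne_zero _ hq
    have hqq : q ^ 2 * q⁻¹ ^ 2 = 1 := by rw [← mul_pow, mul_inv_cancel₀ hq, one_pow]
    have hqq' : q⁻¹ ^ 2 * q ^ 2 = 1 := by rw [← mul_pow, inv_mul_cancel₀ hq, one_pow]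
    induction h <;>
      simp only [map_mul, map_add, map_smul, map_zero, map_one, FreeAlgebra.lift_ι_apply] <;>
      refine TrivSqZeroExt.ext ?_ ?_ <;>
      simp only [TrivSqZeroExt.fst_mul, TrivSqZeroExt.snd_mul, TrivSqZeroExt.fst_add,
        TrivSqZeroExt.snd_add, TrivSqZeroExt.fst_smul, TrivSqZeroExt.snd_smul,
        TrivSqZeroExt.fst_one, TrivSqZeroExt.snd_one, TrivSqZeroExt.fst_zero,
        TrivSqZeroExt.snd_zero, fst_phiGen, mod_eq_iff, toOm_add, toOm_zero, toOm_smul,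
        toOm_opsmul, toOm_csmul, toOm_snd_phiGen,
        dgen, sigma_gen, sgen, Matrix.cons_val_zero, Matrix.cons_val_one, Matrix.head_cons,
        Matrix.cons_val_two, Matrix.tail_cons, Matrix.cons_val_three, mul_zero, zero_mul,
        add_zero, zero_add, smul_zero, neg_eq_smul, smul_mul_assoc, mul_smul_comm, smul_smul]
    all_goals first
      | exact rel_dz q
      | exact rel_zeta2 q
      | exact rel_delta2 q
      | exact rel_deltazeta q
      | exact rel_zetaz q
      | exact rel_deltad q
      | exact rel_zetad q
      | exact rel_deltaz q
      | (rw [rel_deltaz, rel_zetad, smul_add, smul_smul, hqq', one_smul, add_comm])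
      | (rw [rel_zeta2]; simp)
      | (rw [rel_delta2]; simp)
      | (rw [rel_deltazeta, smul_smul]; simp only [mul_neg, neg_mul, neg_neg, hqq, one_smul];
          try norm_num)⟩

lemma Phi_gen (hq : q ≠ 0) (i : Fin 4) : Phi q hq (omGen q i) = phiGen q i := by
  rw [omGen_eq, Phi, mk]
  exact (RingQuot.liftAlgHom_mkAlgHom_apply ℂ _ _ _).trans (FreeAlgebra.lift_ι_apply _ _)

lemma fst_Phi (hq : q ≠ 0) (a : Om q) : (Phi q hq a).fst = a := by
  have h : (TrivSqZeroExt.fstHom ℂ (Om q) (Mod q)).comp (Phi q hq) = AlgHom.id ℂ (Om q) := by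
    refine RingQuot.ringQuot_ext' ℂ _ _ ?_
    refine FreeAlgebra.hom_ext ?_
    funext i
    show (TrivSqZeroExt.fstHom ℂ (Om q) (Mod q)) (Phi q hq (mk q (FreeAlgebra.ι ℂ i)))
        = mk q (FreeAlgebra.ι ℂ i)
    rw [← omGen_eq, Phi_gen]
    rfl
  exact DFunLike.congr_fun h a

noncomputable def D (hq : q ≠ 0) : Om q →ₗ[ℂ] Om q where
  toFun a := TrivSqZeroExt.snd (Phi q hq a)
  map_add' a b := by
    show (TrivSqZeroExt.snd (Phi q hq (a + b)) : Om q) = _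
    rw [map_add]; rfl
  map_smul' c a := by
    show (TrivSqZeroExt.snd (Phi q hq (c • a)) : Om q) = _
    rw [map_smul]; rfl

lemma D_mul (hq : q ≠ 0) (a b : Om q) :
    D q hq (a * b) = D q hq a * b + sigma q a * D q hq b := by
  have h : Phi q hq (a * b) = Phi q hq a * Phi q hq b := map_mul _ _ _
  have h2 := congrArg TrivSqZeroExt.snd h
  rw [TrivSqZeroExt.snd_mul, fst_Phi, fst_Phi] at h2
  show (TrivSqZeroExt.snd (Phi q hq (a * b)) : Om q) = _
  exact h2.trans (add_comm _ _)

lemma D_gen (hq : q ≠ 0) (i : Fin 4) : D q hq (omGen q i) = dgen q i := by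
  show (TrivSqZeroExt.snd (Phi q hq (omGen q i)) : Om q) = _
  rw [Phi_gen]
  rfl

lemma D_gen0 (hq : q ≠ 0) : D q hq (omGen q 0) = omGen q 2 := D_gen q hq 0
lemma D_gen1 (hq : q ≠ 0) : D q hq (omGen q 1) = omGen q 3 := D_gen q hq 1
lemma D_gen2 (hq : q ≠ 0) : D q hq (omGen q 2) = 0 := D_gen q hq 2
lemma D_gen3 (hq : q ≠ 0) : D q hq (omGen q 3) = 0 := D_gen q hq 3

lemma sigma0 : sigma q (omGen q 0) = omGen q 0 := sigma_gen q 0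
lemma sigma1 : sigma q (omGen q 1) = omGen q 1 := sigma_gen q 1
lemma sigma2 : sigma q (omGen q 2) = -omGen q 2 := sigma_gen q 2
lemma sigma3 : sigma q (omGen q 3) = -omGen q 3 := sigma_gen q 3

lemma D_one (hq : q ≠ 0) : D q hq 1 = 0 := by
  show (TrivSqZeroExt.snd (Phi q hq 1) : Om q) = _
  rw [map_one]
  rfl

lemma D_algebraMap (hq : q ≠ 0) (c : ℂ) : D q hq (algebraMap ℂ (Om q) c) = 0 := by
  rw [Algebra.algebraMap_eq_smul_one, map_smul, D_one, smul_zero]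

lemma sigma_algebraMap (c : ℂ) : sigma q (algebraMap ℂ (Om q) c) = algebraMap ℂ (Om q) c :=
  AlgHom.commutes _ _

lemma D_sq_aux (hq : q ≠ 0) (a : Om q) :
    D q hq (sigma q a) = - sigma q (D q hq a) ∧ D q hq (D q hq a) = 0 := by
  obtain ⟨x, rfl⟩ := RingQuot.mkAlgHom_surjective ℂ (OmRel q) a
  show D q hq (sigma q (mk q x)) = - sigma q (D q hq (mk q x)) ∧
    D q hq (D q hq (mk q x)) = 0
  induction x using FreeAlgebra.induction with
  | grade0 c =>
    rw [show mk q (algebraMap ℂ _ c) = algebraMap ℂ (Om q) c from AlgHom.commutes _ _]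
    rw [sigma_algebraMap, D_algebraMap, map_zero, map_zero, neg_zero]
    exact ⟨rfl, rfl⟩
  | grade1 i =>
    rw [← omGen_eq]
    fin_cases i
    · exact ⟨by
        show D q hq (sigma q (omGen q 0)) = -sigma q (D q hq (omGen q 0))
        rw [sigma0, D_gen0, sigma2, neg_neg], by
        show D q hq (D q hq (omGen q 0)) = 0
        rw [D_gen0, D_gen2]⟩
    · exact ⟨by
        show D q hq (sigma q (omGen q 1)) = -sigma q (D q hq (omGen q 1))
        rw [sigma1, D_gen1, sigma3, neg_neg], by
        show D q hq (D q hq (omGen q 1)) = 0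
        rw [D_gen1, D_gen3]⟩
    · exact ⟨by
        show D q hq (sigma q (omGen q 2)) = -sigma q (D q hq (omGen q 2))
        rw [sigma2, map_neg, D_gen2, map_zero], by
        show D q hq (D q hq (omGen q 2)) = 0
        rw [D_gen2, map_zero]⟩
    · exact ⟨by
        show D q hq (sigma q (omGen q 3)) = -sigma q (D q hq (omGen q 3))
        rw [sigma3, map_neg, D_gen3, map_zero], by
        show D q hq (D q hq (omGen q 3)) = 0
        rw [D_gen3, map_zero]⟩
  | mul x y hx hy =>
    obtain ⟨hx1, hx2⟩ := hx
    obtain ⟨hy1, hy2⟩ := hy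
    rw [map_mul]
    constructor
    · rw [map_mul, D_mul, D_mul, map_add, map_mul, map_mul, hx1, hy1]
      simp only [neg_eq_smul, smul_add, smul_mul_assoc, mul_smul_comm, smul_smul]
    · rw [D_mul, map_add, D_mul, D_mul, hx2, hy2, zero_mul, mul_zero, zero_add, add_zero,
        hx1]
      simp only [neg_eq_smul, smul_mul_assoc]
      rw [show (sigma q (D q hq (mk q x)) * D q hq (mk q y))
          + (-1 : ℂ) • (sigma q (D q hq (mk q x)) * D q hq (mk q y)) =
          ((1 : ℂ) + (-1 : ℂ)) • (sigma q (D q hq (mk q x)) * D q hq (mk q y)) by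
        rw [add_smul, one_smul]]
      norm_num
  | add x y hx hy =>
    obtain ⟨hx1, hx2⟩ := hx
    obtain ⟨hy1, hy2⟩ := hy
    constructor
    · rw [map_add, map_add, map_add, hx1, hy1, map_add]
      simp only [map_add, neg_eq_smul, smul_add]
    · rw [map_add, map_add, map_add, hx2, hy2, add_zero]

lemma qint_zero : qint q 0 = 0 := by simp [qint]

lemma qint_one (hq2 : q - q⁻¹ ≠ 0) : qint q 1 = 1 := by
  rw [qint, pow_one, pow_one, div_self hq2]

lemma qint_mul (hq2 : q - q⁻¹ ≠ 0) (k : ℕ) :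
    qint q k * (q - q⁻¹) = q ^ k - q⁻¹ ^ k := div_mul_cancel₀ _ hq2

lemma coef_z (hq : q ≠ 0) (hq2 : q - q⁻¹ ≠ 0) (m : ℕ) :
    q ^ (1 - ((m + 1 : ℕ) : ℤ)) * qint q (m + 1)
      = q ^ (1 - (m : ℤ)) * qint q m * q⁻¹ ^ 2 + 1 := by
  have h1 : q ^ (1 - ((m + 1 : ℕ) : ℤ)) = q / q ^ (m + 1) := by
    rw [zpow_sub₀ hq, zpow_one, zpow_natCast]
  have h2 : q ^ (1 - (m : ℤ)) = q / q ^ m := by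
    rw [zpow_sub₀ hq, zpow_one, zpow_natCast]
  have hpm : q ^ m ≠ 0 := pow_ne_zero _ hq
  have hpm1 : q ^ (m + 1) ≠ 0 := pow_ne_zero _ hq
  refine mul_right_cancel₀ hq2 ?_
  rw [add_mul, one_mul, h1, h2,
    mul_assoc (q / q ^ (m + 1)) (qint q (m + 1)) (q - q⁻¹), qint_mul q hq2,
    mul_right_comm (q / q ^ m * qint q m) (q⁻¹ ^ 2) (q - q⁻¹),
    mul_assoc (q / q ^ m) (qint q m) (q - q⁻¹), qint_mul q hq2, inv_pow, inv_pow, inv_pow]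
  field_simp
  try ring

lemma coef_d (hq : q ≠ 0) (hq2 : q - q⁻¹ ≠ 0) (n : ℕ) :
    q ^ (((n + 1 : ℕ) : ℤ) - 1) * qint q (n + 1)
      = q ^ ((n : ℤ) - 1) * qint q n * q ^ 2 + 1 := by
  have h1 : q ^ (((n + 1 : ℕ) : ℤ) - 1) = q ^ n := by
    rw [show (((n + 1 : ℕ) : ℤ) - 1) = (n : ℤ) by push_cast; ring, zpow_natCast]
  have h2 : q ^ ((n : ℤ) - 1) = q ^ n / q := by
    rw [zpow_sub₀ hq, zpow_one, zpow_natCast]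
  have hpm : q ^ n ≠ 0 := pow_ne_zero _ hq
  have hpm1 : q ^ (n + 1) ≠ 0 := pow_ne_zero _ hq
  refine mul_right_cancel₀ hq2 ?_
  rw [add_mul, one_mul, h1, h2,
    mul_assoc (q ^ n) (qint q (n + 1)) (q - q⁻¹), qint_mul q hq2,
    mul_right_comm (q ^ n / q * qint q n) (q ^ 2) (q - q⁻¹),
    mul_assoc (q ^ n / q) (qint q n) (q - q⁻¹), qint_mul q hq2, inv_pow, inv_pow]
  field_simp
  try ring

lemma D_pow0 (hq : q ≠ 0) (hq2 : q - q⁻¹ ≠ 0) (m : ℕ) :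
    D q hq (omGen q 0 ^ m)
      = (q ^ (1 - (m : ℤ)) * qint q m) • (omGen q 0 ^ (m - 1) * omGen q 2) := by
  induction m with
  | zero => simp [qint_zero, D_one]
  | succ m ih =>
    rcases Nat.eq_zero_or_pos m with rfl | hm
    · rw [pow_one, D_gen0]
      simp [qint_one q hq2]
    · rw [pow_succ, D_mul, ih, map_pow, sigma0, D_gen0]
      rw [smul_mul_assoc, mul_assoc, rel_zetaz, mul_smul_comm, smul_smul, ← mul_assoc,
        ← pow_succ, Nat.sub_add_cancel hm, Nat.add_sub_cancel, coef_z q hq hq2 m,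
        add_smul, one_smul]

lemma D_pow1 (hq : q ≠ 0) (hq2 : q - q⁻¹ ≠ 0) (n : ℕ) :
    D q hq (omGen q 1 ^ n)
      = (q ^ ((n : ℤ) - 1) * qint q n) • (omGen q 1 ^ (n - 1) * omGen q 3) := by
  induction n with
  | zero => simp [qint_zero, D_one]
  | succ n ih =>
    rcases Nat.eq_zero_or_pos n with rfl | hn
    · rw [pow_one, D_gen1]
      simp [qint_one q hq2]
    · rw [pow_succ, D_mul, ih, map_pow, sigma1, D_gen1]
      rw [smul_mul_assoc, mul_assoc, rel_deltad, mul_smul_comm, smul_smul, ← mul_assoc,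
        ← pow_succ, Nat.sub_add_cancel hn, Nat.add_sub_cancel, coef_d q hq hq2 n,
        add_smul, one_smul]

end S17

/-- the map `d(z) = ζ`, `d(∂) = δ`, `d(ζ) = d(δ) = 0`, `d(1) = 0`, extended
as a graded derivation (expressed via the parity automorphism `σ` fixing `z, ∂` and
negating `ζ, δ`: `d(ab) = d(a)b + σ(a)d(b)`), is well defined on `Ω`, satisfies `d² = 0`,
and `d(z^m) = q^{1-m}[m]_q z^{m-1}ζ`, `d(∂^n) = q^{n-1}[n]_q ∂^{n-1}δ`. -/
theorem stmt17 (q : ℂ) (hq : q ≠ 0) (hq2 : q - q⁻¹ ≠ 0) :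
    ∃ (σ : RingQuot (OmRel q) →ₐ[ℂ] RingQuot (OmRel q))
      (D : RingQuot (OmRel q) →ₗ[ℂ] RingQuot (OmRel q)),
      σ (omGen q 0) = omGen q 0 ∧ σ (omGen q 1) = omGen q 1 ∧
      σ (omGen q 2) = -omGen q 2 ∧ σ (omGen q 3) = -omGen q 3 ∧
      D (omGen q 0) = omGen q 2 ∧ D (omGen q 1) = omGen q 3 ∧
      D (omGen q 2) = 0 ∧ D (omGen q 3) = 0 ∧ D 1 = 0 ∧
      (∀ a b : RingQuot (OmRel q), D (a * b) = D a * b + σ a * D b) ∧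
      D ∘ₗ D = 0 ∧
      (∀ m : ℕ, D (omGen q 0 ^ m)
        = (q ^ (1 - (m : ℤ)) * qint q m) • (omGen q 0 ^ (m - 1) * omGen q 2)) ∧
      (∀ n : ℕ, D (omGen q 1 ^ n)
        = (q ^ ((n : ℤ) - 1) * qint q n) • (omGen q 1 ^ (n - 1) * omGen q 3)) := by
  refine ⟨S17.sigma q, S17.D q hq, S17.sigma0 q, S17.sigma1 q, S17.sigma2 q, S17.sigma3 q,
    S17.D_gen0 q hq, S17.D_gen1 q hq, S17.D_gen2 q hq, S17.D_gen3 q hq, S17.D_one q hq,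
    S17.D_mul q hq, ?_, S17.D_pow0 q hq hq2, S17.D_pow1 q hq hq2⟩
  exact LinearMap.ext fun a => (S17.D_sq_aux q hq a).2
end

section
/- Let q = e^{iπ/p} and consider the differential algebra Ω of the previous statement with additionally z^p = 0, ∂^p = 0. Then the 1-forms z^{p-1}ζ and ∂^{p-1}δ are d-closed but not d-exact; i.e., they represent nonzero classes in the cohomology of (Ω, d) in degree 1. -/
/-- The defining relations of `ΩĀ`: generators `0 = z`, `1 = ∂`, `2 = ζ`, `3 = δ`,
with `∂z = (q-q⁻¹)·1 + q⁻² z∂`, `z^p = ∂^p = 0`, `ζ² = δ² = 0`, `δζ = -q⁻² ζδ`,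
`ζz = q⁻² zζ`, `δ∂ = q² ∂δ`, `ζ∂ = q² ∂ζ`, `δz = q⁻² zδ`. -/
inductive OmBarRel (q : ℂ) (p : ℕ) : FreeAlgebra ℂ (Fin 4) → FreeAlgebra ℂ (Fin 4) → Prop
  | dz : OmBarRel q p (FreeAlgebra.ι ℂ 1 * FreeAlgebra.ι ℂ 0)
      ((q - q⁻¹) • (1 : FreeAlgebra ℂ (Fin 4))
        + (q⁻¹ ^ 2) • (FreeAlgebra.ι ℂ 0 * FreeAlgebra.ι ℂ 1))
  | zp : OmBarRel q p ((FreeAlgebra.ι ℂ 0) ^ p) 0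
  | dp : OmBarRel q p ((FreeAlgebra.ι ℂ 1) ^ p) 0
  | zeta2 : OmBarRel q p (FreeAlgebra.ι ℂ 2 * FreeAlgebra.ι ℂ 2) 0
  | delta2 : OmBarRel q p (FreeAlgebra.ι ℂ 3 * FreeAlgebra.ι ℂ 3) 0
  | deltazeta : OmBarRel q p (FreeAlgebra.ι ℂ 3 * FreeAlgebra.ι ℂ 2)
      ((-(q⁻¹ ^ 2)) • (FreeAlgebra.ι ℂ 2 * FreeAlgebra.ι ℂ 3))
  | zetaz : OmBarRel q p (FreeAlgebra.ι ℂ 2 * FreeAlgebra.ι ℂ 0)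
      ((q⁻¹ ^ 2) • (FreeAlgebra.ι ℂ 0 * FreeAlgebra.ι ℂ 2))
  | deltad : OmBarRel q p (FreeAlgebra.ι ℂ 3 * FreeAlgebra.ι ℂ 1)
      ((q ^ 2) • (FreeAlgebra.ι ℂ 1 * FreeAlgebra.ι ℂ 3))
  | zetad : OmBarRel q p (FreeAlgebra.ι ℂ 2 * FreeAlgebra.ι ℂ 1)
      ((q ^ 2) • (FreeAlgebra.ι ℂ 1 * FreeAlgebra.ι ℂ 2))
  | deltaz : OmBarRel q p (FreeAlgebra.ι ℂ 3 * FreeAlgebra.ι ℂ 0)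
      ((q⁻¹ ^ 2) • (FreeAlgebra.ι ℂ 0 * FreeAlgebra.ι ℂ 3))

/-- The images of the generators `z`, `∂`, `ζ`, `δ` in `ΩĀ`. -/
noncomputable def omBarGen (q : ℂ) (p : ℕ) (i : Fin 4) : RingQuot (OmBarRel q p) :=
  RingQuot.mkRingHom (OmBarRel q p) (FreeAlgebra.ι ℂ i)


namespace Stmt18Aux

noncomputable section
open Finset

def sC (q : ℂ) (k : ℕ) : ℂ := ∑ j ∈ Finset.range k, (q⁻¹ ^ 2) ^ j
def tC (q : ℂ) (k : ℕ) : ℂ := ∑ j ∈ Finset.range k, (q ^ 2) ^ j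
def uC (q : ℂ) (n : ℕ) : ℂ := -((q - q⁻¹) * q ^ 2 * tC q n)

variable {q : ℂ} {p : ℕ}

lemma sC_zero : sC q 0 = 0 := by simp [sC]
lemma sC_one : sC q 1 = 1 := by simp [sC]
lemma tC_zero : tC q 0 = 0 := by simp [tC]
lemma tC_one : tC q 1 = 1 := by simp [tC]
lemma sC_succ (k : ℕ) : sC q (k + 1) = sC q k + (q⁻¹ ^ 2) ^ k :=
  Finset.sum_range_succ _ _
lemma tC_succ (k : ℕ) : tC q (k + 1) = tC q k + (q ^ 2) ^ k :=
  Finset.sum_range_succ _ _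
lemma sC_succ' (k : ℕ) : sC q (k + 1) = 1 + q⁻¹ ^ 2 * sC q k := by
  rw [sC, geom_sum_succ, sC]; ring
lemma tC_succ' (k : ℕ) : tC q (k + 1) = 1 + q ^ 2 * tC q k := by
  rw [tC, geom_sum_succ, tC]; ring

structure QF (q : ℂ) (p : ℕ) : Prop where
  hq0 : q ≠ 0
  hq2 : q ^ 2 ≠ 1
  hqp : (q ^ 2) ^ p = 1
  hp : 2 ≤ p

namespace QF

variable (h : QF q p)
include h

lemma qiq : q⁻¹ ^ 2 * q ^ 2 = 1 := by
  have := h.hq0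
  field_simp
lemma hiq2 : q⁻¹ ^ 2 ≠ 1 := by
  rw [inv_pow]
  simpa using h.hq2
lemma hiqp : (q⁻¹ ^ 2) ^ p = 1 := by
  rw [inv_pow, inv_pow, h.hqp, inv_one]
lemma sC_p : sC q p = 0 := by
  rw [sC, geom_sum_eq h.hiq2, h.hiqp, sub_self, zero_div]
lemma tC_p : tC q p = 0 := by
  rw [tC, geom_sum_eq h.hq2, h.hqp, sub_self, zero_div]
lemma tC_pred : q ^ 2 * tC q (p - 1) = -1 := by
  have h1 : p - 1 + 1 = p := by have := h.hp; omega
  have := h.tC_p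
  rw [← h1, tC_succ'] at this
  linear_combination this
lemma uC_pred : uC q (p - 1) = q - q⁻¹ := by
  rw [uC]
  have := h.tC_pred
  linear_combination (-(q - q⁻¹)) * this
lemma uC_rec (n : ℕ) : uC q n = (q - q⁻¹) + q⁻¹ ^ 2 * uC q (n + 1) := by
  rw [uC, uC, tC_succ']
  have := h.qiq
  ring_nf
  linear_combination (q - q⁻¹) * (1 + q^2 * tC q n) * this
lemma uC_zero' : uC q 0 = 0 := by simp [uC, tC_zero]

end QF

/-- the facts about `q` from its explicit value -/
lemma qf_of_exp (p : ℕ) (hp : 2 ≤ p) (q : ℂ)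
    (hq : q = Complex.exp ((Real.pi : ℂ) * Complex.I / (p : ℂ))) : QF q p := by
  have hpC : (p : ℂ) ≠ 0 := by
    simp only [ne_eq, Nat.cast_eq_zero]; omega
  have hq2 : q ^ 2 = Complex.exp (2 * Real.pi * Complex.I / (p : ℂ)) := by
    rw [hq, ← Complex.exp_nat_mul]
    ring_nf
  constructor
  · rw [hq]; exact Complex.exp_ne_zero _
  · rw [hq2, Ne, Complex.exp_eq_one_iff]
    rintro ⟨n, hn⟩
    have h1 : (2 * Real.pi * Complex.I) = (n : ℂ) * (2 * Real.pi * Complex.I) * p := by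
      field_simp at hn
      linear_combination (2 * Real.pi * Complex.I) * hn
    have hpi : (Real.pi : ℂ) ≠ 0 := by
      simpa using Real.pi_ne_zero
    have hI := Complex.I_ne_zero
    have h2 : (1 : ℂ) = (n : ℂ) * p := by
      have key : (2 * (Real.pi:ℂ) * Complex.I) * (1 - (n:ℂ) * p) = 0 := by
        linear_combination h1
      rcases mul_eq_zero.mp key with hk | hk
      · exfalso
        rcases mul_eq_zero.mp hk with hk2 | hk2
        · rcases mul_eq_zero.mp hk2 with hk3 | hk3
          · norm_num at hk3
          · exact hpi hk3
        · exact hI hk2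
      · linear_combination hk
    have h3 : ((n * p : ℤ) : ℂ) = ((1 : ℤ) : ℂ) := by push_cast; linear_combination -h2
    have h4 : (n * p : ℤ) = 1 := by exact_mod_cast h3
    have : (p : ℤ) ∣ 1 := ⟨n, by linarith [h4]⟩
    have := Int.le_of_dvd one_pos this
    omega
  · rw [hq2, ← Complex.exp_nat_mul]
    have : (p : ℂ) * (2 * Real.pi * Complex.I / (p : ℂ)) = 2 * Real.pi * Complex.I := by
      field_simp
    rw [this, Complex.exp_two_pi_mul_I]
  · exact hp


variable {q : ℂ} {p : ℕ}

/-- the module `ℂ^(Fin p × Fin 2)` -/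
abbrev Vv (p : ℕ) : Type := (Fin p × Fin 2) → ℂ

/-- basis-like vectors -/
def eV (p : ℕ) (k : ℕ) (a : Fin 2) : Vv p := fun y => if (y.1 : ℕ) = k ∧ y.2 = a then 1 else 0

/-- shift up by one in the first index -/
def upOp (p : ℕ) : Vv p →ₗ[ℂ] Vv p where
  toFun f x := if 1 ≤ (x.1 : ℕ) then
      f (⟨(x.1 : ℕ) - 1, Nat.lt_of_le_of_lt (Nat.sub_le _ _) x.1.isLt⟩, x.2) else 0
  map_add' f g := by funext x; by_cases h : 1 ≤ (x.1 : ℕ) <;> simp [h]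
  map_smul' c f := by funext x; by_cases h : 1 ≤ (x.1 : ℕ) <;> simp [h]

/-- shift down by one in the first index, with coefficients -/
def lowOp (p : ℕ) (coef : ℕ → ℂ) : Vv p →ₗ[ℂ] Vv p where
  toFun f x := if h : (x.1 : ℕ) + 1 < p then coef ((x.1 : ℕ) + 1) * f (⟨(x.1 : ℕ) + 1, h⟩, x.2)
    else 0
  map_add' f g := by
    funext x; by_cases h : (x.1 : ℕ) + 1 < p <;> simp [h, mul_add]
  map_smul' c f := by
    funext x; by_cases h : (x.1 : ℕ) + 1 < p <;> simp [h]; ring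

/-- send the `a = 0` part to the `a = 1` part with diagonal coefficients `w^m` -/
def diagOp (p : ℕ) (w : ℂ) : Vv p →ₗ[ℂ] Vv p where
  toFun f x := if x.2 = 1 then w ^ (x.1 : ℕ) * f (x.1, 0) else 0
  map_add' f g := by funext x; by_cases h : x.2 = 1 <;> simp [h, mul_add]
  map_smul' c f := by funext x; by_cases h : x.2 = 1 <;> simp [h]; ring

lemma upOp_apply (f : Vv p) (x) : upOp p f x = if 1 ≤ (x.1 : ℕ) then
    f (⟨(x.1 : ℕ) - 1, Nat.lt_of_le_of_lt (Nat.sub_le _ _) x.1.isLt⟩, x.2) else 0 := rfl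

lemma lowOp_apply (coef : ℕ → ℂ) (f : Vv p) (x) : lowOp p coef f x =
    if h : (x.1 : ℕ) + 1 < p then coef ((x.1 : ℕ) + 1) * f (⟨(x.1 : ℕ) + 1, h⟩, x.2) else 0 := rfl

lemma diagOp_apply (w : ℂ) (f : Vv p) (x) : diagOp p w f x =
    if x.2 = 1 then w ^ (x.1 : ℕ) * f (x.1, 0) else 0 := rfl

lemma eV_apply (k : ℕ) (a : Fin 2) (x : Fin p × Fin 2) :
    eV p k a x = if (x.1 : ℕ) = k ∧ x.2 = a then 1 else 0 := rfl

/-- `upOp` on basis vectors (unconditional: both sides vanish out of range) -/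
lemma upOp_eV (k : ℕ) (a : Fin 2) : upOp p (eV p k a) = eV p (k + 1) a := by
  funext x
  rw [upOp_apply, eV_apply, eV_apply]
  split_ifs with h1 h2 h3 h3 <;> simp_all <;> omega

lemma upOp_pow_eV (j k : ℕ) (a : Fin 2) : (upOp p ^ j) (eV p k a) = eV p (k + j) a := by
  induction j with
  | zero => simp
  | succ j ih => rw [pow_succ', Module.End.mul_apply, ih, upOp_eV, Nat.add_assoc]

lemma lowOp_eV0 (coef : ℕ → ℂ) (a : Fin 2) : lowOp p coef (eV p 0 a) = 0 := by
  funext x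
  rw [lowOp_apply]
  split_ifs with h1
  · rw [eV_apply]; simp
  · rfl

lemma diagOp_eV0 (w : ℂ) : diagOp p w (eV p 0 0) = eV p 0 1 := by
  funext x
  rw [diagOp_apply, eV_apply, eV_apply]
  split_ifs with h1 h2 h3 <;> simp_all

lemma diagOp_eV1 (w : ℂ) (k : ℕ) : diagOp p w (eV p k 1) = 0 := by
  funext x
  rw [diagOp_apply]
  split_ifs with h1
  · rw [eV_apply]; simp
  · rfl

lemma diag_diag (w w' : ℂ) : diagOp p w * diagOp p w' = 0 := by
  refine LinearMap.ext fun f => funext fun x => ?_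
  rw [Module.End.mul_apply, diagOp_apply]
  split_ifs with h1
  · rw [diagOp_apply]; simp
  · rfl

lemma upOp_pow_van (j : ℕ) (f : Vv p) (x : Fin p × Fin 2) (hlt : (x.1 : ℕ) < j) :
    (upOp p ^ j) f x = 0 := by
  induction j generalizing x with
  | zero => omega
  | succ j ih =>
    rw [pow_succ', Module.End.mul_apply, upOp_apply]
    split_ifs with h1
    · exact ih _ (by simp; omega)
    · rfl

lemma upOp_pow_p : (upOp p) ^ p = 0 := by
  refine LinearMap.ext fun f => funext fun x => ?_
  exact upOp_pow_van p f x x.1.isLt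

lemma lowOp_pow_van (coef : ℕ → ℂ) (j : ℕ) (f : Vv p) (x : Fin p × Fin 2)
    (hlt : p ≤ (x.1 : ℕ) + j) : (lowOp p coef ^ j) f x = 0 := by
  induction j generalizing x with
  | zero => have := x.1.isLt; omega
  | succ j ih =>
    rw [pow_succ', Module.End.mul_apply, lowOp_apply]
    split_ifs with h1
    · rw [ih (⟨(x.1 : ℕ) + 1, h1⟩, x.2) (by simp; omega), mul_zero]
    · rfl

lemma lowOp_pow_p (coef : ℕ → ℂ) : (lowOp p coef) ^ p = 0 := by
  refine LinearMap.ext fun f => funext fun x => ?_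
  exact lowOp_pow_van coef p f x (by omega)

lemma lowOp_pow_eV0 (coef : ℕ → ℂ) (n : ℕ) (hn : 1 ≤ n) (a : Fin 2) :
    (lowOp p coef ^ n) (eV p 0 a) = 0 := by
  obtain ⟨m, rfl⟩ := Nat.exists_eq_add_of_le hn
  rw [add_comm, pow_succ, Module.End.mul_apply, lowOp_eV0, map_zero]


section Reps

variable {q : ℂ} {p : ℕ}

/-- rep 1 operators: Z = z, PP = ∂, Ze = ζ, (δ = 0) -/
def Zr1 (p : ℕ) : Module.End ℂ (Vv p) := upOp p
def Pr1 (q : ℂ) (p : ℕ) : Module.End ℂ (Vv p) := lowOp p (fun k => (q - q⁻¹) * sC q k)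
def Zer1 (q : ℂ) (p : ℕ) : Module.End ℂ (Vv p) := diagOp p (q⁻¹ ^ 2)

/-- rep 2 operators: Z2 = z, P2 = ∂, Dr2 = δ, (ζ = 0) -/
def Zr2 (q : ℂ) (p : ℕ) : Module.End ℂ (Vv p) := lowOp p (uC q)
def Pr2 (p : ℕ) : Module.End ℂ (Vv p) := upOp p
def Der2 (q : ℂ) (p : ℕ) : Module.End ℂ (Vv p) := diagOp p (q ^ 2)

variable (h : QF q p)
include h

lemma rel1_dz : Pr1 q p * Zr1 p =
    (q - q⁻¹) • (1 : Module.End ℂ (Vv p)) + q⁻¹ ^ 2 • (Zr1 p * Pr1 q p) := by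
  refine LinearMap.ext fun f => funext fun x => ?_
  obtain ⟨⟨m, hm⟩, a⟩ := x
  simp only [Zr1, Pr1, Module.End.mul_apply, LinearMap.add_apply, LinearMap.smul_apply,
    Module.End.one_apply, Pi.add_apply, Pi.smul_apply, smul_eq_mul,
    upOp_apply, lowOp_apply, Fin.val_mk, Nat.add_sub_cancel]
  rcases m with _ | m
  · rw [dif_pos (show 0 + 1 < p by have := h.hp; omega), if_pos (by omega : 1 ≤ 0 + 1),
      if_neg (by omega : ¬ 1 ≤ 0)]
    simp [sC_one]
  · split_ifs with h1 h2 h3 h4 <;> try omega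
    · simp only [Nat.succ_sub_one]
      rw [sC_succ' (m + 1)]
      ring
    · simp only [Nat.succ_sub_one]
      have hz : (1 : ℂ) + q⁻¹ ^ 2 * sC q (m + 1) = 0 := by
        rw [← sC_succ', (by omega : m + 1 + 1 = p), h.sC_p]
      linear_combination (-(q - q⁻¹)) * f (⟨m + 1, hm⟩, a) * hz

lemma rel1_zetaz : Zer1 q p * Zr1 p = q⁻¹ ^ 2 • (Zr1 p * Zer1 q p) := by
  refine LinearMap.ext fun f => funext fun x => ?_
  obtain ⟨⟨m, hm⟩, a⟩ := x
  simp only [Zr1, Zer1, Module.End.mul_apply, LinearMap.smul_apply,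
    Pi.smul_apply, smul_eq_mul, upOp_apply, diagOp_apply, Fin.val_mk]
  rcases m with _ | m
  · split_ifs <;> first | omega | simp
  · simp only [Nat.succ_sub_one]
    split_ifs <;>
    first
      | omega
      | rfl
      | (rw [pow_succ]; ring)
      | (simp; done)

lemma rel1_zetad : Zer1 q p * Pr1 q p = q ^ 2 • (Pr1 q p * Zer1 q p) := by
  refine LinearMap.ext fun f => funext fun x => ?_
  obtain ⟨⟨m, hm⟩, a⟩ := x
  simp only [Zr1, Zer1, Pr1, Module.End.mul_apply, LinearMap.smul_apply,
    Pi.smul_apply, smul_eq_mul, lowOp_apply, diagOp_apply, Fin.val_mk]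
  split_ifs with h1 h2 h3
  · linear_combination (-((q - q⁻¹) * sC q (m + 1) * (q⁻¹ ^ 2) ^ m *
      f (⟨m + 1, h2⟩, (0 : Fin 2)))) * h.qiq
  · ring
  · simp
  · ring

lemma rel2_dz : Pr2 p * Zr2 q p =
    (q - q⁻¹) • (1 : Module.End ℂ (Vv p)) + q⁻¹ ^ 2 • (Zr2 q p * Pr2 p) := by
  refine LinearMap.ext fun f => funext fun x => ?_
  obtain ⟨⟨m, hm⟩, a⟩ := x
  simp only [Zr2, Pr2, Module.End.mul_apply, LinearMap.add_apply, LinearMap.smul_apply,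
    Module.End.one_apply, Pi.add_apply, Pi.smul_apply, smul_eq_mul,
    upOp_apply, lowOp_apply, Fin.val_mk, Nat.add_sub_cancel]
  rcases m with _ | m
  · rw [if_neg (by omega : ¬ 1 ≤ 0), dif_pos (show 0 + 1 < p by have := h.hp; omega)]
    have h0 : uC q 0 = 0 := by simp [uC, tC_zero]
    have := h.uC_rec 0
    rw [h0] at this
    rw [if_pos (by omega : 1 ≤ 0 + 1)]
    linear_combination f (⟨0, by omega⟩, a) * this
  · simp only [Nat.succ_sub_one]
    split_ifs with h1 h2 h3 <;> try omega
    · -- m+1+1 < p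
      have := h.uC_rec (m + 1)
      linear_combination f (⟨m + 1, hm⟩, a) * this
    · -- m+1+1 = p
      have h4 : m + 1 = p - 1 := by omega
      have := h.uC_pred
      rw [← h4] at this
      linear_combination f (⟨m + 1, hm⟩, a) * this

lemma rel2_deltad : Der2 q p * Pr2 p = q ^ 2 • (Pr2 p * Der2 q p) := by
  refine LinearMap.ext fun f => funext fun x => ?_
  obtain ⟨⟨m, hm⟩, a⟩ := x
  simp only [Der2, Pr2, Module.End.mul_apply, LinearMap.smul_apply,
    Pi.smul_apply, smul_eq_mul, upOp_apply, diagOp_apply, Fin.val_mk]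
  rcases m with _ | m
  · split_ifs <;> first | omega | simp
  · simp only [Nat.succ_sub_one]
    split_ifs <;>
    first
      | omega
      | rfl
      | (rw [pow_succ]; ring)
      | (simp; done)

lemma rel2_deltaz : Der2 q p * Zr2 q p = q⁻¹ ^ 2 • (Zr2 q p * Der2 q p) := by
  refine LinearMap.ext fun f => funext fun x => ?_
  obtain ⟨⟨m, hm⟩, a⟩ := x
  simp only [Der2, Zr2, Module.End.mul_apply, LinearMap.smul_apply,
    Pi.smul_apply, smul_eq_mul, lowOp_apply, diagOp_apply, Fin.val_mk]
  split_ifs with h1 h2 h3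
  · linear_combination (-((q ^ 2) ^ m * uC q (m + 1) *
      f (⟨m + 1, h2⟩, (0 : Fin 2)))) * h.qiq
  · ring
  · simp
  · ring

end Reps

section Quot

variable {q : ℂ} {p : ℕ}

def gens1 (q : ℂ) (p : ℕ) : Fin 4 → Module.End ℂ (Vv p)
  | 0 => Zr1 p
  | 1 => Pr1 q p
  | 2 => Zer1 q p
  | 3 => 0

def gens2 (q : ℂ) (p : ℕ) : Fin 4 → Module.End ℂ (Vv p)
  | 0 => Zr2 q p
  | 1 => Pr2 p
  | 2 => 0
  | 3 => Der2 q p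

@[simp] lemma gens1_zero : gens1 q p 0 = Zr1 p := rfl
@[simp] lemma gens1_one : gens1 q p 1 = Pr1 q p := rfl
@[simp] lemma gens1_two : gens1 q p 2 = Zer1 q p := rfl
@[simp] lemma gens1_three : gens1 q p 3 = 0 := rfl
@[simp] lemma gens2_zero : gens2 q p 0 = Zr2 q p := rfl
@[simp] lemma gens2_one : gens2 q p 1 = Pr2 p := rfl
@[simp] lemma gens2_two : gens2 q p 2 = 0 := rfl
@[simp] lemma gens2_three : gens2 q p 3 = Der2 q p := rfl

def rho1 (q : ℂ) (p : ℕ) : FreeAlgebra ℂ (Fin 4) →ₐ[ℂ] Module.End ℂ (Vv p) :=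
  FreeAlgebra.lift ℂ (gens1 q p)

def rho2 (q : ℂ) (p : ℕ) : FreeAlgebra ℂ (Fin 4) →ₐ[ℂ] Module.End ℂ (Vv p) :=
  FreeAlgebra.lift ℂ (gens2 q p)

lemma rel1_zp : Zr1 p ^ p = 0 := upOp_pow_p
lemma rel1_dp : Pr1 q p ^ p = 0 := lowOp_pow_p _
lemma rel1_zeta2 : Zer1 q p * Zer1 q p = 0 := diag_diag _ _
lemma rel2_zp : Zr2 q p ^ p = 0 := lowOp_pow_p _
lemma rel2_dp : Pr2 p ^ p = 0 := upOp_pow_p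
lemma rel2_delta2 : Der2 q p * Der2 q p = 0 := diag_diag _ _

lemma rho1_rel (h : QF q p) : ∀ ⦃x y⦄, OmBarRel q p x y → rho1 q p x = rho1 q p y := by
  intro x y hxy
  cases hxy <;>
    simp only [rho1, map_mul, map_add, map_smul, map_one, map_pow, map_zero, map_neg,
      FreeAlgebra.lift_ι_apply, gens1_zero, gens1_one, gens1_two, gens1_three]
  · exact rel1_dz h
  · exact rel1_zp
  · exact rel1_dp
  · exact rel1_zeta2
  · simp
  · simp
  · exact rel1_zetaz h
  · simp
  · exact rel1_zetad h
  · simp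

lemma rho2_rel (h : QF q p) : ∀ ⦃x y⦄, OmBarRel q p x y → rho2 q p x = rho2 q p y := by
  intro x y hxy
  cases hxy <;>
    simp only [rho2, map_mul, map_add, map_smul, map_one, map_pow, map_zero, map_neg,
      FreeAlgebra.lift_ι_apply, gens2_zero, gens2_one, gens2_two, gens2_three]
  · exact rel2_dz h
  · exact rel2_zp
  · exact rel2_dp
  · simp
  · exact rel2_delta2
  · simp
  · simp
  · exact rel2_deltad h
  · simp
  · exact rel2_deltaz h

def rhoQ1 (h : QF q p) : RingQuot (OmBarRel q p) →ₐ[ℂ] Module.End ℂ (Vv p) :=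
  RingQuot.liftAlgHom ℂ ⟨rho1 q p, rho1_rel h⟩

def rhoQ2 (h : QF q p) : RingQuot (OmBarRel q p) →ₐ[ℂ] Module.End ℂ (Vv p) :=
  RingQuot.liftAlgHom ℂ ⟨rho2 q p, rho2_rel h⟩

lemma omBarGen_eq_mkAlgHom (i : Fin 4) :
    omBarGen q p i = RingQuot.mkAlgHom ℂ (OmBarRel q p) (FreeAlgebra.ι ℂ i) := by
  rw [omBarGen, ← RingQuot.mkAlgHom_coe ℂ (OmBarRel q p)]
  rfl

lemma rhoQ1_gen (h : QF q p) (i : Fin 4) : rhoQ1 h (omBarGen q p i) = gens1 q p i := by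
  rw [omBarGen_eq_mkAlgHom, rhoQ1, RingQuot.liftAlgHom_mkAlgHom_apply]
  exact FreeAlgebra.lift_ι_apply _ _

lemma rhoQ2_gen (h : QF q p) (i : Fin 4) : rhoQ2 h (omBarGen q p i) = gens2 q p i := by
  rw [omBarGen_eq_mkAlgHom, rhoQ2, RingQuot.liftAlgHom_mkAlgHom_apply]
  exact FreeAlgebra.lift_ι_apply _ _

/-- relations in the quotient -/
lemma qr_dz : omBarGen q p 1 * omBarGen q p 0 =
    (q - q⁻¹) • (1 : RingQuot (OmBarRel q p)) + q⁻¹ ^ 2 • (omBarGen q p 0 * omBarGen q p 1) := by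
  simp only [omBarGen_eq_mkAlgHom, ← map_mul]
  rw [RingQuot.mkAlgHom_rel ℂ OmBarRel.dz]
  simp [map_add, map_smul, map_mul, map_one]

lemma qr_zp : omBarGen q p 0 ^ p = 0 := by
  simp only [omBarGen_eq_mkAlgHom, ← map_pow]
  rw [RingQuot.mkAlgHom_rel ℂ OmBarRel.zp, map_zero]

lemma qr_dp : omBarGen q p 1 ^ p = 0 := by
  simp only [omBarGen_eq_mkAlgHom, ← map_pow]
  rw [RingQuot.mkAlgHom_rel ℂ OmBarRel.dp, map_zero]

lemma qr_zeta2 : omBarGen q p 2 * omBarGen q p 2 = 0 := by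
  simp only [omBarGen_eq_mkAlgHom, ← map_mul]
  rw [RingQuot.mkAlgHom_rel ℂ OmBarRel.zeta2, map_zero]

lemma qr_delta2 : omBarGen q p 3 * omBarGen q p 3 = 0 := by
  simp only [omBarGen_eq_mkAlgHom, ← map_mul]
  rw [RingQuot.mkAlgHom_rel ℂ OmBarRel.delta2, map_zero]

lemma qr_deltazeta : omBarGen q p 3 * omBarGen q p 2 =
    (-(q⁻¹ ^ 2)) • (omBarGen q p 2 * omBarGen q p 3) := by
  simp only [omBarGen_eq_mkAlgHom, ← map_mul]
  rw [RingQuot.mkAlgHom_rel ℂ OmBarRel.deltazeta]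
  simp only [map_smul, map_mul]

lemma qr_zetaz : omBarGen q p 2 * omBarGen q p 0 =
    (q⁻¹ ^ 2) • (omBarGen q p 0 * omBarGen q p 2) := by
  simp only [omBarGen_eq_mkAlgHom, ← map_mul]
  rw [RingQuot.mkAlgHom_rel ℂ OmBarRel.zetaz]
  simp [map_smul, map_mul]

lemma qr_deltad : omBarGen q p 3 * omBarGen q p 1 =
    (q ^ 2) • (omBarGen q p 1 * omBarGen q p 3) := by
  simp only [omBarGen_eq_mkAlgHom, ← map_mul]
  rw [RingQuot.mkAlgHom_rel ℂ OmBarRel.deltad]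
  simp [map_smul, map_mul]

lemma qr_zetad : omBarGen q p 2 * omBarGen q p 1 =
    (q ^ 2) • (omBarGen q p 1 * omBarGen q p 2) := by
  simp only [omBarGen_eq_mkAlgHom, ← map_mul]
  rw [RingQuot.mkAlgHom_rel ℂ OmBarRel.zetad]
  simp [map_smul, map_mul]

lemma qr_deltaz : omBarGen q p 3 * omBarGen q p 0 =
    (q⁻¹ ^ 2) • (omBarGen q p 0 * omBarGen q p 3) := by
  simp only [omBarGen_eq_mkAlgHom, ← map_mul]
  rw [RingQuot.mkAlgHom_rel ℂ OmBarRel.deltaz]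
  simp [map_smul, map_mul]

end Quot

section Comm

variable {q : ℂ} {p : ℕ}

lemma comm_pow_gen {A : Type} [Ring A] [Algebra ℂ A] (x y : A) (lam : ℂ)
    (hxy : x * y = lam • (y * x)) (m : ℕ) : x * y ^ m = (lam ^ m) • (y ^ m * x) := by
  induction m with
  | zero => simp
  | succ m ih =>
    rw [pow_succ', ← mul_assoc, hxy, smul_mul_assoc, mul_assoc, ih, mul_smul_comm,
      smul_smul, ← mul_assoc, ← pow_succ', ← pow_succ']

lemma comm_zeta_zpow (m : ℕ) : omBarGen q p 2 * omBarGen q p 0 ^ m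
    = ((q⁻¹ ^ 2) ^ m) • (omBarGen q p 0 ^ m * omBarGen q p 2) :=
  comm_pow_gen _ _ _ qr_zetaz m

lemma comm_zeta_dpow (n : ℕ) : omBarGen q p 2 * omBarGen q p 1 ^ n
    = ((q ^ 2) ^ n) • (omBarGen q p 1 ^ n * omBarGen q p 2) :=
  comm_pow_gen _ _ _ qr_zetad n

lemma comm_delta_zpow (m : ℕ) : omBarGen q p 3 * omBarGen q p 0 ^ m
    = ((q⁻¹ ^ 2) ^ m) • (omBarGen q p 0 ^ m * omBarGen q p 3) :=
  comm_pow_gen _ _ _ qr_deltaz m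

lemma comm_delta_dpow (n : ℕ) : omBarGen q p 3 * omBarGen q p 1 ^ n
    = ((q ^ 2) ^ n) • (omBarGen q p 1 ^ n * omBarGen q p 3) :=
  comm_pow_gen _ _ _ qr_deltad n

lemma comm_delta_zetapow (a : ℕ) : omBarGen q p 3 * omBarGen q p 2 ^ a
    = ((-(q⁻¹ ^ 2)) ^ a) • (omBarGen q p 2 ^ a * omBarGen q p 3) :=
  comm_pow_gen _ _ _ qr_deltazeta a

lemma comm_d_zpow (m : ℕ) : omBarGen q p 1 * omBarGen q p 0 ^ m
    = ((q⁻¹ ^ 2) ^ m) • (omBarGen q p 0 ^ m * omBarGen q p 1)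
      + ((q - q⁻¹) * sC q m) • omBarGen q p 0 ^ (m - 1) := by
  induction m with
  | zero => simp [sC_zero]
  | succ m ih =>
    rw [pow_succ', ← mul_assoc, qr_dz, add_mul, smul_mul_assoc, smul_mul_assoc, one_mul,
      mul_assoc, ih, mul_add, mul_smul_comm, mul_smul_comm, smul_add, smul_smul, smul_smul,
      ← mul_assoc, ← pow_succ']
    rcases Nat.eq_zero_or_pos m with rfl | hm
    · simp [sC_zero, sC_one, add_comm]
    · have hz : omBarGen q p 0 * omBarGen q p 0 ^ (m - 1) = omBarGen q p 0 ^ m := by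
        rw [← pow_succ']
        congr 1
        omega
      rw [hz]
      have h1 : (m + 1 : ℕ) - 1 = m := by omega
      rw [h1, ← add_assoc, add_comm ((q - q⁻¹) • omBarGen q p 0 ^ m), add_assoc, ← add_smul]
      congr 2
      rw [sC_succ']
      ring

end Comm

section Der

variable {q : ℂ} {p : ℕ}
variable (σ : RingQuot (OmBarRel q p) →ₐ[ℂ] RingQuot (OmBarRel q p))
variable (D : RingQuot (OmBarRel q p) →ₗ[ℂ] RingQuot (OmBarRel q p))

/-- normal monomials -/
def NB (q : ℂ) (p : ℕ) (m n a b : ℕ) : RingQuot (OmBarRel q p) :=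
  omBarGen q p 0 ^ m * (omBarGen q p 1 ^ n * (omBarGen q p 2 ^ a * omBarGen q p 3 ^ b))

variable (hσ0 : σ (omBarGen q p 0) = omBarGen q p 0)
  (hσ1 : σ (omBarGen q p 1) = omBarGen q p 1)
  (hD0 : D (omBarGen q p 0) = omBarGen q p 2)
  (hD1 : D (omBarGen q p 1) = omBarGen q p 3)
  (hD2 : D (omBarGen q p 2) = 0) (hD3 : D (omBarGen q p 3) = 0)
  (hder : ∀ a b, D (a * b) = D a * b + σ a * D b)

include hder

lemma D_one : D 1 = 0 := by
  have h := hder 1 1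
  rw [mul_one, map_one σ, one_mul, mul_one] at h
  exact (left_eq_add.mp h)

include hσ0 hD0 in
lemma D_zpow (m : ℕ) : D (omBarGen q p 0 ^ m)
    = sC q m • (omBarGen q p 0 ^ (m - 1) * omBarGen q p 2) := by
  induction m with
  | zero =>
    rw [pow_zero, D_one σ D hder, sC_zero, zero_smul]
  | succ m ih =>
    rw [pow_succ', hder, hD0, hσ0, ih, comm_zeta_zpow, mul_smul_comm]
    rcases Nat.eq_zero_or_pos m with rfl | hm
    · simp [sC_zero, sC_one]
    · have hz : omBarGen q p 0 * (omBarGen q p 0 ^ (m - 1) * omBarGen q p 2)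
          = omBarGen q p 0 ^ m * omBarGen q p 2 := by
        rw [← mul_assoc, ← pow_succ']
        congr 2
        omega
      rw [hz]
      have h1 : (m + 1 : ℕ) - 1 = m := by omega
      rw [h1, ← add_smul, sC_succ]
      congr 1
      ring

include hσ1 hD1 in
lemma D_dpow (n : ℕ) : D (omBarGen q p 1 ^ n)
    = tC q n • (omBarGen q p 1 ^ (n - 1) * omBarGen q p 3) := by
  induction n with
  | zero =>
    rw [pow_zero, D_one σ D hder, tC_zero, zero_smul]
  | succ n ih =>
    rw [pow_succ', hder, hD1, hσ1, ih, comm_delta_dpow, mul_smul_comm]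
    rcases Nat.eq_zero_or_pos n with rfl | hn
    · rw [tC_zero, zero_smul, add_zero, tC_one, one_smul, pow_zero, pow_zero, one_smul]
    · have hz : omBarGen q p 1 * (omBarGen q p 1 ^ (n - 1) * omBarGen q p 3)
          = omBarGen q p 1 ^ n * omBarGen q p 3 := by
        rw [← mul_assoc, ← pow_succ']
        congr 2
        omega
      rw [hz]
      have h1 : (n + 1 : ℕ) - 1 = n := by omega
      rw [h1, ← add_smul, tC_succ]
      congr 1
      ring

include hD2 in
lemma D_zetapow (a : ℕ) : D (omBarGen q p 2 ^ a) = 0 := by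
  induction a with
  | zero => rw [pow_zero]; exact D_one σ D hder
  | succ a ih => rw [pow_succ', hder, hD2, ih, zero_mul, mul_zero, add_zero]

include hD3 in
lemma D_deltapow (b : ℕ) : D (omBarGen q p 3 ^ b) = 0 := by
  induction b with
  | zero => rw [pow_zero]; exact D_one σ D hder
  | succ b ih => rw [pow_succ', hder, hD3, ih, zero_mul, mul_zero, add_zero]

include hσ0 hσ1 hD0 hD1 hD2 hD3 in
lemma D_NB (m n a b : ℕ) : D (NB q p m n a b)
    = sC q m • ((omBarGen q p 0 ^ (m - 1) * omBarGen q p 2)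
        * (omBarGen q p 1 ^ n * (omBarGen q p 2 ^ a * omBarGen q p 3 ^ b)))
      + tC q n • (omBarGen q p 0 ^ m * ((omBarGen q p 1 ^ (n - 1) * omBarGen q p 3)
        * (omBarGen q p 2 ^ a * omBarGen q p 3 ^ b))) := by
  have hw : D (omBarGen q p 2 ^ a * omBarGen q p 3 ^ b) = 0 := by
    rw [hder, D_zetapow σ D hD2 hder, D_deltapow σ D hD3 hder, zero_mul, mul_zero, add_zero]
  have hrest : D (omBarGen q p 1 ^ n * (omBarGen q p 2 ^ a * omBarGen q p 3 ^ b))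
      = tC q n • ((omBarGen q p 1 ^ (n - 1) * omBarGen q p 3)
          * (omBarGen q p 2 ^ a * omBarGen q p 3 ^ b)) := by
    rw [hder, hw, mul_zero, add_zero, D_dpow σ D hσ1 hD1 hder, smul_mul_assoc]
  rw [NB, hder, hrest, D_zpow σ D hσ0 hD0 hder, smul_mul_assoc, map_pow, hσ0, mul_smul_comm]

end Der

section Span

variable {q : ℂ} {p : ℕ}

lemma NB_one : NB q p 0 0 0 0 = 1 := by simp [NB]

lemma z_NB (m n a b : ℕ) : omBarGen q p 0 * NB q p m n a b = NB q p (m + 1) n a b := by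
  rw [NB, NB, ← mul_assoc, ← pow_succ']

lemma zeta_NB (m n a b : ℕ) : omBarGen q p 2 * NB q p m n a b
    = ((q⁻¹ ^ 2) ^ m * (q ^ 2) ^ n) • NB q p m n (a + 1) b := by
  rw [NB, NB, ← mul_assoc, comm_zeta_zpow, smul_mul_assoc, mul_assoc,
    ← mul_assoc (omBarGen q p 2), comm_zeta_dpow, smul_mul_assoc, mul_smul_comm, smul_smul,
    mul_assoc, ← mul_assoc (omBarGen q p 2), ← pow_succ']

lemma delta_NB (m n a b : ℕ) : omBarGen q p 3 * NB q p m n a b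
    = ((q⁻¹ ^ 2) ^ m * (q ^ 2) ^ n * (-(q⁻¹ ^ 2)) ^ a) • NB q p m n a (b + 1) := by
  rw [NB, NB, ← mul_assoc, comm_delta_zpow, smul_mul_assoc, mul_assoc,
    ← mul_assoc (omBarGen q p 3), comm_delta_dpow, smul_mul_assoc, mul_smul_comm, smul_smul,
    mul_assoc, ← mul_assoc (omBarGen q p 3), comm_delta_zetapow, smul_mul_assoc,
    mul_smul_comm, mul_smul_comm, smul_smul, mul_assoc, mul_assoc (omBarGen q p 2 ^ a),
    ← pow_succ']

lemma d_NB (m n a b : ℕ) : omBarGen q p 1 * NB q p m n a b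
    = ((q⁻¹ ^ 2) ^ m) • NB q p m (n + 1) a b
      + ((q - q⁻¹) * sC q m) • NB q p (m - 1) n a b := by
  rw [NB, ← mul_assoc, comm_d_zpow, add_mul, smul_mul_assoc, smul_mul_assoc, mul_assoc,
    ← mul_assoc (omBarGen q p 1), ← pow_succ', NB, NB, ← mul_assoc]

/-- the span of all normal monomials -/
def SpanNB (q : ℂ) (p : ℕ) : Submodule ℂ (RingQuot (OmBarRel q p)) :=
  Submodule.span ℂ (Set.range fun x : ℕ × ℕ × ℕ × ℕ => NB q p x.1 x.2.1 x.2.2.1 x.2.2.2)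

lemma NB_mem (m n a b : ℕ) : NB q p m n a b ∈ SpanNB q p :=
  Submodule.subset_span ⟨(m, n, a, b), rfl⟩

lemma mul_SpanNB (g : RingQuot (OmBarRel q p))
    (hg : ∀ m n a b, g * NB q p m n a b ∈ SpanNB q p) :
    ∀ v ∈ SpanNB q p, g * v ∈ SpanNB q p := by
  intro v hv
  induction hv using Submodule.span_induction with
  | mem x hx =>
    obtain ⟨⟨m, n, a, b⟩, rfl⟩ := hx
    exact hg m n a b
  | zero => rw [mul_zero]; exact Submodule.zero_mem _
  | add x y _ _ ihx ihy => rw [mul_add]; exact Submodule.add_mem _ ihx ihy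
  | smul c x _ ih => rw [mul_smul_comm]; exact Submodule.smul_mem _ _ ih

lemma mem_SpanNB (x : RingQuot (OmBarRel q p)) : x ∈ SpanNB q p := by
  obtain ⟨y, rfl⟩ := RingQuot.mkAlgHom_surjective ℂ (OmBarRel q p) x
  have key : ∀ v ∈ SpanNB q p, RingQuot.mkAlgHom ℂ (OmBarRel q p) y * v ∈ SpanNB q p := by
    induction y using FreeAlgebra.induction with
    | grade0 r =>
      intro v hv
      rw [AlgHom.commutes, ← Algebra.smul_def]
      exact Submodule.smul_mem _ _ hv
    | grade1 i =>
      refine mul_SpanNB _ ?_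
      intro m n a b
      rw [← omBarGen_eq_mkAlgHom]
      fin_cases i
      · show omBarGen q p 0 * NB q p m n a b ∈ SpanNB q p
        rw [z_NB]; exact NB_mem _ _ _ _
      · show omBarGen q p 1 * NB q p m n a b ∈ SpanNB q p
        rw [d_NB]
        exact Submodule.add_mem _ (Submodule.smul_mem _ _ (NB_mem _ _ _ _))
          (Submodule.smul_mem _ _ (NB_mem _ _ _ _))
      · show omBarGen q p 2 * NB q p m n a b ∈ SpanNB q p
        rw [zeta_NB]; exact Submodule.smul_mem _ _ (NB_mem _ _ _ _)
      · show omBarGen q p 3 * NB q p m n a b ∈ SpanNB q p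
        rw [delta_NB]; exact Submodule.smul_mem _ _ (NB_mem _ _ _ _)
    | mul x y ihx ihy =>
      intro v hv
      rw [map_mul, mul_assoc]
      exact ihx _ (ihy _ hv)
    | add x y ihx ihy =>
      intro v hv
      rw [map_add, add_mul]
      exact Submodule.add_mem _ (ihx _ hv) (ihy _ hv)
  have h1 : (1 : RingQuot (OmBarRel q p)) ∈ SpanNB q p := NB_one ▸ NB_mem 0 0 0 0
  simpa using key 1 h1

end Span

section Phi

variable {q : ℂ} {p : ℕ}

def phi1 (h : QF q p) : RingQuot (OmBarRel q p) →ₗ[ℂ] ℂ where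
  toFun x := rhoQ1 h x (eV p 0 0) (⟨p - 1, by have := h.hp; omega⟩, 1)
  map_add' x y := by simp [map_add]
  map_smul' c x := by simp [map_smul]

def phi2 (h : QF q p) : RingQuot (OmBarRel q p) →ₗ[ℂ] ℂ where
  toFun x := rhoQ2 h x (eV p 0 0) (⟨p - 1, by have := h.hp; omega⟩, 1)
  map_add' x y := by simp [map_add]
  map_smul' c x := by simp [map_smul]

lemma phi1_apply (h : QF q p) (x : RingQuot (OmBarRel q p)) :
    phi1 h x = rhoQ1 h x (eV p 0 0) (⟨p - 1, by have := h.hp; omega⟩, 1) := rfl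

lemma phi2_apply (h : QF q p) (x : RingQuot (OmBarRel q p)) :
    phi2 h x = rhoQ2 h x (eV p 0 0) (⟨p - 1, by have := h.hp; omega⟩, 1) := rfl

lemma rhoQ1_0 (h : QF q p) : rhoQ1 h (omBarGen q p 0) = Zr1 p := rhoQ1_gen h 0
lemma rhoQ1_1 (h : QF q p) : rhoQ1 h (omBarGen q p 1) = Pr1 q p := rhoQ1_gen h 1
lemma rhoQ1_2 (h : QF q p) : rhoQ1 h (omBarGen q p 2) = Zer1 q p := rhoQ1_gen h 2
lemma rhoQ1_3 (h : QF q p) : rhoQ1 h (omBarGen q p 3) = 0 := rhoQ1_gen h 3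
lemma rhoQ2_0 (h : QF q p) : rhoQ2 h (omBarGen q p 0) = Zr2 q p := rhoQ2_gen h 0
lemma rhoQ2_1 (h : QF q p) : rhoQ2 h (omBarGen q p 1) = Pr2 p := rhoQ2_gen h 1
lemma rhoQ2_2 (h : QF q p) : rhoQ2 h (omBarGen q p 2) = 0 := rhoQ2_gen h 2
lemma rhoQ2_3 (h : QF q p) : rhoQ2 h (omBarGen q p 3) = Der2 q p := rhoQ2_gen h 3

lemma diag_pow_zero (w : ℂ) (k : ℕ) : diagOp p w ^ (k + 2) = 0 := by
  rw [pow_add, pow_two, diag_diag, mul_zero]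

lemma Zer1_eV00 : Zer1 q p (eV p 0 0) = eV p 0 1 := diagOp_eV0 _
lemma Zer1_eV1 (k : ℕ) : Zer1 q p (eV p k 1) = 0 := diagOp_eV1 _ _
lemma Der2_eV00 : Der2 q p (eV p 0 0) = eV p 0 1 := diagOp_eV0 _
lemma Der2_eV1 (k : ℕ) : Der2 q p (eV p k 1) = 0 := diagOp_eV1 _ _
lemma Zr1_pow_eV (j k : ℕ) (a : Fin 2) : (Zr1 p ^ j) (eV p k a) = eV p (k + j) a :=
  upOp_pow_eV _ _ _
lemma Pr2_pow_eV (j k : ℕ) (a : Fin 2) : (Pr2 p ^ j) (eV p k a) = eV p (k + j) a :=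
  upOp_pow_eV _ _ _
lemma Pr1_pow_eV0 (n : ℕ) (hn : 1 ≤ n) (a : Fin 2) : (Pr1 q p ^ n) (eV p 0 a) = 0 :=
  lowOp_pow_eV0 _ _ hn _
lemma Zer1_pow2 (k : ℕ) : Zer1 q p ^ (k + 2) = 0 := diag_pow_zero _ _
lemma Der2_pow2 (k : ℕ) : Der2 q p ^ (k + 2) = 0 := diag_pow_zero _ _

lemma Zr2_apply_top (hp0 : p - 1 < p) (f : Vv p) (a : Fin 2) :
    Zr2 q p f (⟨p - 1, hp0⟩, a) = 0 := by
  rw [Zr2, lowOp_apply, dif_neg (by simp; omega)]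

/-- value of `φ₁` on `z^{p-1} ζ` -/
lemma phi1_val (h : QF q p) : phi1 h (omBarGen q p 0 ^ (p - 1) * omBarGen q p 2) = 1 := by
  simp only [phi1_apply, map_mul, map_pow, rhoQ1_0, rhoQ1_2, Module.End.mul_apply,
    Zer1_eV00, Zr1_pow_eV, eV_apply, zero_add]
  simp

/-- value of `φ₂` on `∂^{p-1} δ` -/
lemma phi2_val (h : QF q p) : phi2 h (omBarGen q p 1 ^ (p - 1) * omBarGen q p 3) = 1 := by
  simp only [phi2_apply, map_mul, map_pow, rhoQ2_1, rhoQ2_3, Module.End.mul_apply,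
    Der2_eV00, Pr2_pow_eV, eV_apply, zero_add]
  simp

/-- `φ₁` kills the first term of `D(NB)` (with its coefficient) -/
lemma phi1_T1 (h : QF q p) (m n a b : ℕ) :
    sC q m * phi1 h ((omBarGen q p 0 ^ (m - 1) * omBarGen q p 2)
      * (omBarGen q p 1 ^ n * (omBarGen q p 2 ^ a * omBarGen q p 3 ^ b))) = 0 := by
  rcases Nat.eq_zero_or_pos b with rfl | hb
  swap
  · simp [phi1_apply, map_mul, map_pow, rhoQ1_3, zero_pow (show b ≠ 0 by omega)]
  rcases a with _ | _ | a
  · -- a = 0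
    rcases Nat.eq_zero_or_pos n with rfl | hn
    · simp only [phi1_apply, map_mul, map_pow, rhoQ1_0, rhoQ1_1, rhoQ1_2, pow_zero, mul_one,
        one_mul, Module.End.mul_apply, Module.End.one_apply, Zer1_eV00, Zr1_pow_eV, eV_apply,
        zero_add, Fin.val_mk]
      by_cases hm : m = p
      · rw [hm, h.sC_p, zero_mul]
      · rw [if_neg (by have := h.hp; simp; omega), mul_zero]
    · simp [phi1_apply, map_mul, map_pow, rhoQ1_0, rhoQ1_1, rhoQ1_2, Module.End.mul_apply,
        Pr1_pow_eV0 n hn]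
  · -- a = 1
    rcases Nat.eq_zero_or_pos n with rfl | hn
    · simp [phi1_apply, map_mul, map_pow, rhoQ1_0, rhoQ1_1, rhoQ1_2, Module.End.mul_apply,
        Zer1_eV00, Zer1_eV1]
    · simp [phi1_apply, map_mul, map_pow, rhoQ1_0, rhoQ1_1, rhoQ1_2, Module.End.mul_apply,
        Zer1_eV00, Pr1_pow_eV0 n hn]
  · -- a ≥ 2
    simp [phi1_apply, map_mul, map_pow, rhoQ1_2, Zer1_pow2 a]

/-- `φ₂` kills the second term of `D(NB)` (with its coefficient) -/
lemma phi2_T2 (h : QF q p) (m n a b : ℕ) :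
    tC q n * phi2 h (omBarGen q p 0 ^ m * ((omBarGen q p 1 ^ (n - 1) * omBarGen q p 3)
      * (omBarGen q p 2 ^ a * omBarGen q p 3 ^ b))) = 0 := by
  rcases Nat.eq_zero_or_pos a with rfl | ha
  swap
  · simp [phi2_apply, map_mul, map_pow, rhoQ2_2, zero_pow (show a ≠ 0 by omega)]
  rcases b with _ | _ | b
  · -- b = 0
    rcases Nat.eq_zero_or_pos m with rfl | hm
    · simp only [phi2_apply, map_mul, map_pow, rhoQ2_0, rhoQ2_1, rhoQ2_3, pow_zero, mul_one,
        one_mul, Module.End.mul_apply, Module.End.one_apply, Der2_eV00, Pr2_pow_eV, eV_apply,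
        zero_add, Fin.val_mk]
      by_cases hn : n = p
      · rw [hn, h.tC_p, zero_mul]
      · rw [if_neg (by have := h.hp; simp; omega), mul_zero]
    · obtain ⟨k, rfl⟩ := Nat.exists_eq_add_of_le hm
      simp only [phi2_apply, map_mul, map_pow, rhoQ2_0, rhoQ2_1, rhoQ2_3, pow_zero, mul_one,
        one_mul, Module.End.mul_apply, Module.End.one_apply, Der2_eV00, Pr2_pow_eV, zero_add]
      rw [add_comm 1 k, pow_succ', Module.End.mul_apply,
        Zr2_apply_top (by have := h.hp; omega), mul_zero]
  · -- b = 1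
    simp [phi2_apply, map_mul, map_pow, rhoQ2_0, rhoQ2_1, rhoQ2_2, rhoQ2_3,
      Module.End.mul_apply, Der2_eV00, Der2_eV1]
  · -- b ≥ 2
    simp [phi2_apply, map_mul, map_pow, rhoQ2_3, Der2_pow2 b]

/-- `φ₂` kills the first term of `D(NB)` always -/
lemma phi2_T1 (h : QF q p) (m n a b : ℕ) :
    phi2 h ((omBarGen q p 0 ^ (m - 1) * omBarGen q p 2)
      * (omBarGen q p 1 ^ n * (omBarGen q p 2 ^ a * omBarGen q p 3 ^ b))) = 0 := by
  simp [phi2_apply, map_mul, rhoQ2_2]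

/-- `φ₁` kills the second term of `D(NB)` always -/
lemma phi1_T2 (h : QF q p) (m n a b : ℕ) :
    phi1 h (omBarGen q p 0 ^ m * ((omBarGen q p 1 ^ (n - 1) * omBarGen q p 3)
      * (omBarGen q p 2 ^ a * omBarGen q p 3 ^ b))) = 0 := by
  simp [phi1_apply, map_mul, rhoQ1_3]

end Phi

end
end Stmt18Aux

/-- for `q = e^{iπ/p}` and any differential `D` on `ΩĀ` (a graded
derivation with parity automorphism `σ`, `D(z) = ζ`, `D(∂) = δ`, `D(ζ) = D(δ) = 0`),
the 1-forms `z^{p-1}ζ` and `∂^{p-1}δ` are `D`-closed but not `D`-exact. -/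
theorem stmt18 (p : ℕ) (hp : 2 ≤ p) (q : ℂ)
    (hq : q = Complex.exp ((Real.pi : ℂ) * Complex.I / (p : ℂ))) :
    ∀ (σ : RingQuot (OmBarRel q p) →ₐ[ℂ] RingQuot (OmBarRel q p))
      (D : RingQuot (OmBarRel q p) →ₗ[ℂ] RingQuot (OmBarRel q p)),
      σ (omBarGen q p 0) = omBarGen q p 0 → σ (omBarGen q p 1) = omBarGen q p 1 →
      σ (omBarGen q p 2) = -omBarGen q p 2 → σ (omBarGen q p 3) = -omBarGen q p 3 →
      D (omBarGen q p 0) = omBarGen q p 2 → D (omBarGen q p 1) = omBarGen q p 3 →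
      D (omBarGen q p 2) = 0 → D (omBarGen q p 3) = 0 →
      (∀ a b, D (a * b) = D a * b + σ a * D b) →
      (D (omBarGen q p 0 ^ (p - 1) * omBarGen q p 2) = 0 ∧
        ¬ ∃ ω, D ω = omBarGen q p 0 ^ (p - 1) * omBarGen q p 2) ∧
      (D (omBarGen q p 1 ^ (p - 1) * omBarGen q p 3) = 0 ∧
        ¬ ∃ ω, D ω = omBarGen q p 1 ^ (p - 1) * omBarGen q p 3) := by
  have h : Stmt18Aux.QF q p := Stmt18Aux.qf_of_exp p hp q hq
  intro σ D hσ0 hσ1 hσ2 hσ3 hD0 hD1 hD2 hD3 hder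
  have key1 : ∀ m n a b : ℕ, Stmt18Aux.phi1 h (D (Stmt18Aux.NB q p m n a b)) = 0 := by
    intro m n a b
    rw [Stmt18Aux.D_NB σ D hσ0 hσ1 hD0 hD1 hD2 hD3 hder, map_add, map_smul, map_smul,
      smul_eq_mul, smul_eq_mul, Stmt18Aux.phi1_T2 h m n a b, mul_zero, add_zero,
      Stmt18Aux.phi1_T1 h m n a b]
  have key2 : ∀ m n a b : ℕ, Stmt18Aux.phi2 h (D (Stmt18Aux.NB q p m n a b)) = 0 := by
    intro m n a b
    rw [Stmt18Aux.D_NB σ D hσ0 hσ1 hD0 hD1 hD2 hD3 hder, map_add, map_smul, map_smul,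
      smul_eq_mul, smul_eq_mul, Stmt18Aux.phi2_T1 h m n a b, mul_zero, zero_add,
      Stmt18Aux.phi2_T2 h m n a b]
  constructor
  · constructor
    · rw [hder, hD2, mul_zero, add_zero, Stmt18Aux.D_zpow σ D hσ0 hD0 hder,
        smul_mul_assoc, mul_assoc, Stmt18Aux.qr_zeta2, mul_zero, smul_zero]
    · rintro ⟨ω, hω⟩
      have hmem : ω ∈ Stmt18Aux.SpanNB q p := Stmt18Aux.mem_SpanNB ω
      have hDm : D ω ∈ Submodule.map D (Stmt18Aux.SpanNB q p) := Submodule.mem_map_of_mem hmem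
      rw [Stmt18Aux.SpanNB, Submodule.map_span] at hDm
      have hle : Submodule.span ℂ (D '' Set.range fun x : ℕ × ℕ × ℕ × ℕ =>
          Stmt18Aux.NB q p x.1 x.2.1 x.2.2.1 x.2.2.2)
          ≤ LinearMap.ker (Stmt18Aux.phi1 h) := by
        rw [Submodule.span_le]
        rintro _ ⟨_, ⟨⟨m, n, a, b⟩, rfl⟩, rfl⟩
        exact LinearMap.mem_ker.mpr (key1 m n a b)
      have h0 : Stmt18Aux.phi1 h (D ω) = 0 := LinearMap.mem_ker.mp (hle hDm)
      rw [hω, Stmt18Aux.phi1_val h] at h0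
      exact one_ne_zero h0
  · constructor
    · rw [hder, hD3, mul_zero, add_zero, Stmt18Aux.D_dpow σ D hσ1 hD1 hder,
        smul_mul_assoc, mul_assoc, Stmt18Aux.qr_delta2, mul_zero, smul_zero]
    · rintro ⟨ω, hω⟩
      have hmem : ω ∈ Stmt18Aux.SpanNB q p := Stmt18Aux.mem_SpanNB ω
      have hDm : D ω ∈ Submodule.map D (Stmt18Aux.SpanNB q p) := Submodule.mem_map_of_mem hmem
      rw [Stmt18Aux.SpanNB, Submodule.map_span] at hDm
      have hle : Submodule.span ℂ (D '' Set.range fun x : ℕ × ℕ × ℕ × ℕ =>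
          Stmt18Aux.NB q p x.1 x.2.1 x.2.2.1 x.2.2.2)
          ≤ LinearMap.ker (Stmt18Aux.phi2 h) := by
        rw [Submodule.span_le]
        rintro _ ⟨_, ⟨⟨m, n, a, b⟩, rfl⟩, rfl⟩
        exact LinearMap.mem_ker.mpr (key2 m n a b)
      have h0 : Stmt18Aux.phi2 h (D ω) = 0 := LinearMap.mem_ker.mp (hle hDm)
      rw [hω, Stmt18Aux.phi2_val h] at h0
      exact one_ne_zero h0
end
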